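/- arXiv:1407.3482 — 4 statements merged into one kernel-verified Lean document; each statement's English description precedes it below -/
import Mathlib

section
/- Euler's identity: for |q|<1 and |t|<1, the sum over n ≥ 0 of t^n/(q;q)_n equals 1/(t;q)_∞. -/
open scoped BigOperators

/-- `(q;q)_n = ∏_{k=1}^n (1 - q^k)` -/
noncomputable def qp (q : ℂ) (n : ℕ) : ℂ := ∏ k ∈ Finset.range n, (1 - q ^ (k + 1))

/-- `(q;q)_∞ = ∏_{k≥1} (1 - q^k)` -/
noncomputable def qpInf (q : ℂ) : ℂ := ∏' k : ℕ, (1 - q ^ (k + 1))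

/-- `(a;q)_n = ∏_{k=1}^n (1 - a q^{k-1})` -/
noncomputable def qpa (a q : ℂ) (n : ℕ) : ℂ := ∏ k ∈ Finset.range n, (1 - a * q ^ k)

/-- `(a;q)_∞ = ∏_{k≥0} (1 - a q^k)` -/
noncomputable def qpaInf (a q : ℂ) : ℂ := ∏' k : ℕ, (1 - a * q ^ k)

section aux

variable {q : ℂ}

lemma pow_norm_le (hq : ‖q‖ < 1) (k : ℕ) : ‖q‖ ^ (k + 1) ≤ ‖q‖ := by
  calc ‖q‖ ^ (k + 1) ≤ ‖q‖ ^ 1 :=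
        pow_le_pow_of_le_one (norm_nonneg q) hq.le (by omega)
    _ = ‖q‖ := pow_one _

lemma one_sub_pow_pos (hq : ‖q‖ < 1) (k : ℕ) : 0 < 1 - ‖q‖ ^ (k + 1) := by
  have := pow_norm_le hq k; linarith

/-- Summability of the real logs. -/
lemma summable_log_real (hq : ‖q‖ < 1) :
    Summable (fun k : ℕ => Real.log (1 - ‖q‖ ^ (k + 1))) := by
  have hb : Summable (fun k : ℕ => ‖q‖ ^ (k + 1) * (1 - ‖q‖)⁻¹) := by
    have := (summable_geometric_of_lt_one (norm_nonneg q) hq).mul_left ‖q‖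
    have h2 := this.mul_right (1 - ‖q‖)⁻¹
    refine h2.congr fun k => ?_
    ring
  refine Summable.of_norm_bounded hb fun k => ?_
  have hx := pow_norm_le hq k
  have hxp : (0:ℝ) ≤ ‖q‖ ^ (k + 1) := pow_nonneg (norm_nonneg q) _
  have hpos := one_sub_pow_pos hq k
  have hlog_le : Real.log (1 - ‖q‖ ^ (k + 1)) ≤ 0 :=
    Real.log_nonpos (by linarith) (by linarith)
  rw [Real.norm_eq_abs, abs_of_nonpos hlog_le]
  have h1 : -Real.log (1 - ‖q‖ ^ (k + 1)) = Real.log (1 - ‖q‖ ^ (k + 1))⁻¹ := by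
    rw [Real.log_inv]
  rw [h1]
  have h2 : Real.log (1 - ‖q‖ ^ (k + 1))⁻¹ ≤ (1 - ‖q‖ ^ (k + 1))⁻¹ - 1 :=
    Real.log_le_sub_one_of_pos (inv_pos.mpr hpos)
  have h3 : (1 - ‖q‖ ^ (k + 1))⁻¹ - 1 = ‖q‖ ^ (k + 1) / (1 - ‖q‖ ^ (k + 1)) := by
    rw [inv_eq_one_div, div_sub_one hpos.ne']
    congr 1
    ring
  have h4 : ‖q‖ ^ (k + 1) / (1 - ‖q‖ ^ (k + 1)) ≤ ‖q‖ ^ (k + 1) * (1 - ‖q‖)⁻¹ := by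
    rw [div_eq_mul_inv]
    have hinv : (1 - ‖q‖ ^ (k + 1))⁻¹ ≤ (1 - ‖q‖)⁻¹ :=
      inv_anti₀ (by linarith) (by linarith)
    exact mul_le_mul_of_nonneg_left hinv hxp
  linarith

/-- The real constant `Cq = ∏_{k≥1}(1-‖q‖^k)`. -/
lemma qp_zero (q : ℂ) : qp q 0 = 1 := by simp [qp]

noncomputable def Cq (q : ℂ) : ℝ := ∏' k : ℕ, (1 - ‖q‖ ^ (k + 1))

lemma Cq_pos (hq : ‖q‖ < 1) : 0 < Cq q := by
  have := Real.rexp_tsum_eq_tprod (f := fun k => 1 - ‖q‖ ^ (k + 1))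
    (fun k => one_sub_pow_pos hq k) (summable_log_real hq)
  have h := this
  rw [Cq, ← h]
  exact Real.exp_pos _

lemma Cq_multipliable (hq : ‖q‖ < 1) :
    Multipliable (fun k : ℕ => 1 - ‖q‖ ^ (k + 1)) :=
  Real.multipliable_of_summable_log (f := fun k => 1 - ‖q‖ ^ (k + 1))
    (fun k => one_sub_pow_pos hq k) (summable_log_real hq)

lemma partial_antitone (hq : ‖q‖ < 1) :
    Antitone (fun n : ℕ => ∏ k ∈ Finset.range n, (1 - ‖q‖ ^ (k + 1))) := by
  apply antitone_nat_of_succ_le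
  intro n
  rw [Finset.prod_range_succ]
  have hnn : (0:ℝ) ≤ ∏ k ∈ Finset.range n, (1 - ‖q‖ ^ (k + 1)) :=
    Finset.prod_nonneg fun k _ => (one_sub_pow_pos hq k).le
  have h1 : 1 - ‖q‖ ^ (n + 1) ≤ 1 := by
    have := pow_nonneg (norm_nonneg q) (n + 1); linarith
  exact mul_le_of_le_one_right hnn h1

/-- Partial products are bounded below by `Cq`. -/
lemma Cq_le_partial (hq : ‖q‖ < 1) (n : ℕ) :
    Cq q ≤ ∏ k ∈ Finset.range n, (1 - ‖q‖ ^ (k + 1)) := by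
  have htend := (Cq_multipliable hq).hasProd.tendsto_prod_nat
  refine le_of_tendsto htend ?_
  filter_upwards [Filter.eventually_ge_atTop n] with N hN
  exact partial_antitone hq hN

lemma Cq_le_norm_qp (hq : ‖q‖ < 1) (n : ℕ) : Cq q ≤ ‖qp q n‖ := by
  refine (Cq_le_partial hq n).trans ?_
  rw [qp, norm_prod]
  refine Finset.prod_le_prod (fun k _ => (one_sub_pow_pos hq k).le) (fun k _ => ?_)
  calc 1 - ‖q‖ ^ (k + 1) = ‖(1:ℂ)‖ - ‖q ^ (k + 1)‖ := by simp
    _ ≤ ‖(1:ℂ) - q ^ (k + 1)‖ := norm_sub_norm_le _ _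

lemma qp_ne_zero (hq : ‖q‖ < 1) (n : ℕ) : qp q n ≠ 0 := by
  intro h
  have := Cq_le_norm_qp hq n
  rw [h, norm_zero] at this
  exact absurd this (not_le.mpr (Cq_pos hq))

/-- Summability of the Euler series. -/
lemma euler_summable (hq : ‖q‖ < 1) {x : ℂ} (hx : ‖x‖ < 1) :
    Summable (fun n : ℕ => x ^ n / qp q n) := by
  have hC := Cq_pos hq
  refine Summable.of_norm_bounded (g := fun n => ‖x‖ ^ n * (Cq q)⁻¹)
    ((summable_geometric_of_lt_one (norm_nonneg x) hx).mul_right _) fun n => ?_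
  rw [norm_div, norm_pow, div_eq_mul_inv]
  have hinv : ‖qp q n‖⁻¹ ≤ (Cq q)⁻¹ := inv_anti₀ hC (Cq_le_norm_qp hq n)
  exact mul_le_mul_of_nonneg_left hinv (pow_nonneg (norm_nonneg x) n)

set_option maxHeartbeats 1000000 in
/-- the functional equation `(1-x) S(x) = S(xq)`. -/
lemma euler_funct (hq : ‖q‖ < 1) {x : ℂ} (hx : ‖x‖ < 1) :
    (1 - x) * ∑' n : ℕ, x ^ n / qp q n = ∑' n : ℕ, (x * q) ^ n / qp q n := by
  have hxq : ‖x * q‖ < 1 := by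
    rw [norm_mul]
    nlinarith [norm_nonneg x, norm_nonneg q]
  have hS := euler_summable hq hx
  have hSq := euler_summable hq hxq
  have hS1 : Summable (fun n : ℕ => x ^ (n+1) / qp q (n+1)) :=
    (summable_nat_add_iff (f := fun n : ℕ => x ^ n / qp q n) 1).mpr hS
  have hSq1 : Summable (fun n : ℕ => (x*q) ^ (n+1) / qp q (n+1)) :=
    (summable_nat_add_iff (f := fun n : ℕ => (x*q) ^ n / qp q n) 1).mpr hSq
  have key : ∀ n : ℕ, x ^ (n+1) / qp q (n+1) - (x*q) ^ (n+1) / qp q (n+1)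
      = x * (x ^ n / qp q n) := by
    intro n
    have hq1 : qp q (n+1) = qp q n * (1 - q ^ (n+1)) := by
      rw [qp, qp, Finset.prod_range_succ]
    have hne : (1 : ℂ) - q ^ (n+1) ≠ 0 := by
      intro h
      have h2 : q ^ (n+1) = 1 := by linear_combination -h
      have : ‖q ^ (n+1)‖ < 1 := by
        rw [norm_pow]
        calc ‖q‖ ^ (n+1) ≤ ‖q‖ := pow_norm_le hq n
          _ < 1 := hq
      rw [h2, norm_one] at this
      exact lt_irrefl _ this
    have hne' : qp q n ≠ 0 := qp_ne_zero hq n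
    rw [hq1]
    field_simp
    ring
  -- rewrite both tsums using zero-add
  rw [Summable.tsum_eq_zero_add hS, Summable.tsum_eq_zero_add hSq]
  simp only [pow_zero, qp_zero, div_one]
  have hsub : ∑' n : ℕ, x ^ (n+1) / qp q (n+1) - ∑' n : ℕ, (x*q) ^ (n+1) / qp q (n+1)
      = x * ∑' n : ℕ, x ^ n / qp q n := by
    rw [← Summable.tsum_sub hS1 hSq1, ← tsum_mul_left]
    exact tsum_congr key
  have hx1 : x * ∑' n : ℕ, x ^ n / qp q n
      = x * (1 + ∑' n : ℕ, x ^ (n+1) / qp q (n+1)) := by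
    rw [Summable.tsum_eq_zero_add hS]
    simp only [pow_zero, qp_zero, div_one]
  rw [hx1] at hsub
  linear_combination hsub

lemma norm_tq_lt (hq : ‖q‖ < 1) {t : ℂ} (ht : ‖t‖ < 1) (N : ℕ) : ‖t * q ^ N‖ < 1 := by
  rw [norm_mul, norm_pow]
  calc ‖t‖ * ‖q‖ ^ N ≤ ‖t‖ * 1 := by
        gcongr
        exact pow_le_one₀ (norm_nonneg q) hq.le
    _ = ‖t‖ := mul_one _
    _ < 1 := ht

lemma euler_iterate (hq : ‖q‖ < 1) {t : ℂ} (ht : ‖t‖ < 1) (N : ℕ) :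
    qpa t q N * ∑' n : ℕ, t ^ n / qp q n = ∑' n : ℕ, (t * q ^ N) ^ n / qp q n := by
  induction N with
  | zero => simp [qpa]
  | succ N ih =>
    have hxN := norm_tq_lt hq ht N
    have step : qpa t q (N + 1) = qpa t q N * (1 - t * q ^ N) := by
      rw [qpa, Finset.prod_range_succ, qpa]
    calc qpa t q (N+1) * ∑' n : ℕ, t ^ n / qp q n
        = (1 - t * q ^ N) * (qpa t q N * ∑' n : ℕ, t ^ n / qp q n) := by rw [step]; ring
      _ = (1 - t * q ^ N) * ∑' n : ℕ, (t * q ^ N) ^ n / qp q n := by rw [ih]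
      _ = ∑' n : ℕ, ((t * q ^ N) * q) ^ n / qp q n := euler_funct hq hxN
      _ = ∑' n : ℕ, (t * q ^ (N+1)) ^ n / qp q n := by
          apply tsum_congr
          intro n
          congr 1
          ring

lemma tq_ne_one (hq : ‖q‖ < 1) {t : ℂ} (ht : ‖t‖ < 1) (k : ℕ) : (1 : ℂ) - t * q ^ k ≠ 0 := by
  intro h
  have h2 : t * q ^ k = 1 := by linear_combination -h
  have := norm_tq_lt hq ht k
  rw [h2, norm_one] at this
  exact lt_irrefl _ this

lemma qpa_multipliable (hq : ‖q‖ < 1) {t : ℂ} (ht : ‖t‖ < 1) :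
    Multipliable (fun k : ℕ => 1 - t * q ^ k) := by
  refine Complex.multipliable_of_summable_log (f := fun k => 1 - t * q ^ k) ?_
  have hgeo : Summable (fun k : ℕ => 3/2 * (‖t‖ * ‖q‖ ^ k)) :=
    (((summable_geometric_of_lt_one (norm_nonneg q) hq).mul_left ‖t‖).mul_left (3/2))
  refine Summable.of_norm_bounded_eventually_nat hgeo ?_
  have htend : Filter.Tendsto (fun k : ℕ => ‖t‖ * ‖q‖ ^ k) Filter.atTop (nhds 0) := by
    have := tendsto_pow_atTop_nhds_zero_of_norm_lt_one (x := ‖q‖) (by rwa [norm_norm])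
    simpa using this.const_mul ‖t‖
  have hev : ∀ᶠ k : ℕ in Filter.atTop, ‖t‖ * ‖q‖ ^ k ≤ 1/2 := by
    filter_upwards [htend.eventually (eventually_le_nhds (by norm_num : (0:ℝ) < 1/2))] with k hk
    exact hk
  filter_upwards [hev] with k hk
  have hz : ‖-(t * q ^ k)‖ ≤ 1/2 := by
    rw [norm_neg, norm_mul, norm_pow]; exact hk
  have := Complex.norm_log_one_add_half_le_self hz
  have heq : (1 : ℂ) + -(t * q ^ k) = 1 - t * q ^ k := by ring
  rw [heq] at this
  calc ‖Complex.log (1 - t * q ^ k)‖ ≤ 3/2 * ‖-(t * q ^ k)‖ := this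
    _ = 3/2 * (‖t‖ * ‖q‖ ^ k) := by rw [norm_neg, norm_mul, norm_pow]

set_option maxHeartbeats 1000000 in
lemma S_sub_one_bound (hq : ‖q‖ < 1) {t : ℂ} (ht : ‖t‖ < 1) {x : ℂ} (hx : ‖x‖ ≤ ‖t‖) :
    ‖(∑' n : ℕ, x ^ n / qp q n) - 1‖ ≤ ‖x‖ * ((1 - ‖t‖)⁻¹ * (Cq q)⁻¹) := by
  have hx1 : ‖x‖ < 1 := lt_of_le_of_lt hx ht
  have hS := euler_summable hq hx1
  have hS1 : Summable (fun n : ℕ => x ^ (n+1) / qp q (n+1)) :=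
    (summable_nat_add_iff (f := fun n : ℕ => x ^ n / qp q n) 1).mpr hS
  have hC := Cq_pos hq
  have hrw : (∑' n : ℕ, x ^ n / qp q n) - 1 = ∑' n : ℕ, x ^ (n+1) / qp q (n+1) := by
    rw [Summable.tsum_eq_zero_add hS]
    simp only [pow_zero, qp_zero, div_one]
    ring
  rw [hrw]
  have hb : Summable (fun n : ℕ => ‖x‖ ^ (n+1) * (Cq q)⁻¹) := by
    have := ((summable_geometric_of_lt_one (norm_nonneg x) hx1).mul_left ‖x‖).mul_right (Cq q)⁻¹
    refine this.congr fun n => ?_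
    ring
  have h1 : ‖∑' n : ℕ, x ^ (n+1) / qp q (n+1)‖ ≤ ∑' n : ℕ, ‖x‖ ^ (n+1) * (Cq q)⁻¹ := by
    refine tsum_of_norm_bounded hb.hasSum fun n => ?_
    rw [norm_div, norm_pow, div_eq_mul_inv]
    gcongr
    exact Cq_le_norm_qp hq (n+1)
  refine h1.trans ?_
  have h2 : ∑' n : ℕ, ‖x‖ ^ (n+1) * (Cq q)⁻¹
      = ‖x‖ * (1 - ‖x‖)⁻¹ * (Cq q)⁻¹ := by
    have : ∀ n : ℕ, ‖x‖ ^ (n+1) * (Cq q)⁻¹ = (‖x‖ * (Cq q)⁻¹) * ‖x‖ ^ n := by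
      intro n; ring
    rw [tsum_congr this, tsum_mul_left, tsum_geometric_of_lt_one (norm_nonneg x) hx1]
    ring
  rw [h2]
  have h3 : (1 - ‖x‖)⁻¹ ≤ (1 - ‖t‖)⁻¹ := by
    apply inv_anti₀ (by linarith)
    linarith
  calc ‖x‖ * (1 - ‖x‖)⁻¹ * (Cq q)⁻¹ ≤ ‖x‖ * (1 - ‖t‖)⁻¹ * (Cq q)⁻¹ := by
        gcongr
    _ = ‖x‖ * ((1 - ‖t‖)⁻¹ * (Cq q)⁻¹) := by ring

lemma S_tendsto_one (hq : ‖q‖ < 1) {t : ℂ} (ht : ‖t‖ < 1) :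
    Filter.Tendsto (fun N : ℕ => ∑' n : ℕ, (t * q ^ N) ^ n / qp q n)
      Filter.atTop (nhds 1) := by
  have hdiff : Filter.Tendsto
      (fun N : ℕ => (∑' n : ℕ, (t * q ^ N) ^ n / qp q n) - 1) Filter.atTop (nhds 0) := by
    apply squeeze_zero_norm
      (a := fun N : ℕ => (‖t‖ * ((1 - ‖t‖)⁻¹ * (Cq q)⁻¹)) * ‖q‖ ^ N)
    · intro N
      have hx : ‖t * q ^ N‖ ≤ ‖t‖ := by
        rw [norm_mul, norm_pow]
        calc ‖t‖ * ‖q‖ ^ N ≤ ‖t‖ * 1 := by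
              gcongr
              exact pow_le_one₀ (norm_nonneg q) hq.le
          _ = ‖t‖ := mul_one _
      have := S_sub_one_bound hq ht hx
      refine this.trans (le_of_eq ?_)
      rw [norm_mul, norm_pow]
      ring
    · have := tendsto_pow_atTop_nhds_zero_of_norm_lt_one (x := ‖q‖) (by rwa [norm_norm])
      simpa using this.const_mul (‖t‖ * ((1 - ‖t‖)⁻¹ * (Cq q)⁻¹))
  have := hdiff.add (tendsto_const_nhds (x := (1:ℂ)))
  simpa using this

end aux

/-- Euler's identity. -/
theorem euler_first (q t : ℂ) (hq : ‖q‖ < 1) (ht : ‖t‖ < 1) :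
    ∑' n : ℕ, t ^ n / qp q n = 1 / qpaInf t q := by
  set S := ∑' n : ℕ, t ^ n / qp q n with hSdef
  have h1 : Filter.Tendsto (fun N : ℕ => qpa t q N * S) Filter.atTop
      (nhds (qpaInf t q * S)) := by
    have := (qpa_multipliable hq ht).hasProd.tendsto_prod_nat
    exact this.mul_const S
  have h2 : Filter.Tendsto (fun N : ℕ => qpa t q N * S) Filter.atTop (nhds 1) := by
    have hfe : (fun N : ℕ => qpa t q N * S)
        = fun N : ℕ => ∑' n : ℕ, (t * q ^ N) ^ n / qp q n :=
      funext fun N => euler_iterate hq ht N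
    rw [hfe]
    exact S_tendsto_one hq ht
  have heq : qpaInf t q * S = 1 := tendsto_nhds_unique h1 h2
  have hne : qpaInf t q ≠ 0 := left_ne_zero_of_mul (heq ▸ one_ne_zero)
  rw [eq_div_iff hne]
  linear_combination heq
end

section
/- For any integer A, the sum over n ≥ 0 (with n + A ≥ 0) of q^(n²+An)/((q;q)_n (q;q)_{n+A}) equals 1/(q;q)_∞, as an identity of formal power series in q (terms with n + A < 0 are interpreted as 0). -/
open Finset Filter Topology


open scoped BigOperators

namespace AndrewsAux

variable {q : ℂ}

lemma norm_pow_lt (hq : ‖q‖ < 1) (k : ℕ) : ‖q ^ (k + 1)‖ < 1 := by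
  rw [norm_pow]
  calc ‖q‖ ^ (k+1) ≤ ‖q‖ ^ 1 := pow_le_pow_of_le_one (norm_nonneg q) hq.le (by omega)
  _ = ‖q‖ := pow_one _
  _ < 1 := hq

lemma one_sub_ne (hq : ‖q‖ < 1) (k : ℕ) : (1 : ℂ) - q ^ (k + 1) ≠ 0 := by
  intro h
  have h2 : q ^ (k+1) = 1 := by linear_combination -h
  have := norm_pow_lt hq k
  rw [h2] at this; simp at this

lemma qp_ne (hq : ‖q‖ < 1) (N : ℕ) : qp q N ≠ 0 :=
  Finset.prod_ne_zero_iff.2 fun k _ => one_sub_ne hq k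

lemma qp_succ (N : ℕ) : qp q (N + 1) = qp q N * (1 - q ^ (N + 1)) :=
  Finset.prod_range_succ _ _

/-- for `0 ≤ x ≤ r < 1`, `exp (-(x/(1-r))) ≤ 1 - x`. -/
lemma exp_le_one_sub {x r : ℝ} (hx0 : 0 ≤ x) (hxr : x ≤ r) (hr : r < 1) :
    Real.exp (-(x / (1 - r))) ≤ 1 - x := by
  have hr1 : 0 < 1 - r := by linarith
  have hx1 : 0 < 1 - x := by linarith
  rw [Real.exp_neg]
  rw [inv_le_comm₀ (Real.exp_pos _) hx1]
  calc (1 - x)⁻¹ = x / (1 - x) + 1 := by field_simp; ring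
  _ ≤ x / (1 - r) + 1 := by
      have : x / (1 - x) ≤ x / (1 - r) :=
        div_le_div_of_nonneg_left hx0 hr1 (by linarith)
      linarith
  _ ≤ Real.exp (x / (1 - r)) := Real.add_one_le_exp _

lemma sum_pow_le (hq : ‖q‖ < 1) (N : ℕ) :
    ∑ k ∈ range N, ‖q‖ ^ (k + 1) ≤ ‖q‖ / (1 - ‖q‖) := by
  have h0 : (0:ℝ) ≤ ‖q‖ := norm_nonneg q
  have h1 : 0 < 1 - ‖q‖ := by linarith
  have : ∑ k ∈ range N, ‖q‖ ^ (k+1) = ‖q‖ * ∑ k ∈ range N, ‖q‖ ^ k := by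
    rw [Finset.mul_sum]; congr 1; ext k; ring
  rw [this, div_eq_mul_inv]
  gcongr
  calc ∑ k ∈ range N, ‖q‖ ^ k ≤ ∑' k : ℕ, ‖q‖ ^ k :=
        Summable.sum_le_tsum _ (fun k _ => pow_nonneg h0 k) (summable_geometric_of_lt_one h0 hq)
  _ = (1 - ‖q‖)⁻¹ := tsum_geometric_of_lt_one h0 hq

/-- uniform lower bound for the partial products -/
noncomputable def cLow (q : ℂ) : ℝ := Real.exp (-(‖q‖ / ((1 - ‖q‖) * (1 - ‖q‖))))
noncomputable def mUp (q : ℂ) : ℝ := Real.exp (‖q‖ / (1 - ‖q‖))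

lemma cLow_pos : 0 < cLow q := Real.exp_pos _

lemma qp_lower (hq : ‖q‖ < 1) (N : ℕ) : cLow q ≤ ‖qp q N‖ := by
  have h0 : (0:ℝ) ≤ ‖q‖ := norm_nonneg q
  have h1 : 0 < 1 - ‖q‖ := by linarith
  have hfac : ∀ k ∈ range N, Real.exp (-(‖q‖^(k+1) / (1 - ‖q‖))) ≤ ‖1 - q ^ (k+1)‖ := by
    intro k _
    calc Real.exp (-(‖q‖^(k+1) / (1 - ‖q‖))) ≤ 1 - ‖q‖^(k+1) := by
          refine exp_le_one_sub (pow_nonneg h0 _) ?_ hq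
          calc ‖q‖^(k+1) ≤ ‖q‖^1 := pow_le_pow_of_le_one h0 hq.le (by omega)
          _ = ‖q‖ := pow_one _
    _ ≤ ‖1 - q ^ (k+1)‖ := by
          have := norm_sub_norm_le (1 : ℂ) (q ^ (k+1))
          simpa [norm_pow] using this
  calc cLow q ≤ Real.exp (-((∑ k ∈ range N, ‖q‖^(k+1)) / (1 - ‖q‖))) := by
        apply Real.exp_le_exp.2
        rw [neg_le_neg_iff, ← div_div]
        gcongr
        exact sum_pow_le hq N
  _ = ∏ k ∈ range N, Real.exp (-(‖q‖^(k+1) / (1 - ‖q‖))) := by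
        rw [← Real.exp_sum]
        congr 1
        rw [Finset.sum_div, neg_eq_iff_eq_neg, ← Finset.sum_neg_distrib]
        simp
  _ ≤ ∏ k ∈ range N, ‖1 - q ^ (k+1)‖ :=
        Finset.prod_le_prod (fun k _ => (Real.exp_pos _).le) hfac
  _ = ‖qp q N‖ := (norm_prod _ _).symm

lemma qp_upper (hq : ‖q‖ < 1) (N : ℕ) : ‖qp q N‖ ≤ mUp q := by
  have h0 : (0:ℝ) ≤ ‖q‖ := norm_nonneg q
  calc ‖qp q N‖ = ∏ k ∈ range N, ‖1 - q ^ (k+1)‖ := norm_prod _ _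
  _ ≤ ∏ k ∈ range N, Real.exp (‖q‖^(k+1)) := by
        apply Finset.prod_le_prod (fun k _ => norm_nonneg _)
        intro k _
        calc ‖1 - q^(k+1)‖ ≤ ‖(1:ℂ)‖ + ‖q^(k+1)‖ := norm_sub_le _ _
        _ = 1 + ‖q‖^(k+1) := by simp [norm_pow]
        _ ≤ Real.exp (‖q‖^(k+1)) := by
              have := Real.add_one_le_exp (‖q‖^(k+1)); linarith
  _ = Real.exp (∑ k ∈ range N, ‖q‖^(k+1)) := (Real.exp_sum _ _).symm
  _ ≤ mUp q := Real.exp_le_exp.2 (sum_pow_le hq N)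

lemma multipliable (hq : ‖q‖ < 1) : Multipliable (fun k : ℕ => 1 - q ^ (k + 1)) := by
  apply Complex.multipliable_of_summable_log
  apply Summable.of_norm_bounded_eventually_nat (g := fun k => 3/2 * ‖q‖^(k+1))
  · exact ((summable_geometric_of_lt_one (norm_nonneg q) hq).mul_left (3/2*‖q‖)).congr
      (fun k => by ring)
  · have htend : Tendsto (fun k : ℕ => ‖q‖ ^ (k+1)) atTop (𝓝 0) := by
      have := tendsto_pow_atTop_nhds_zero_of_norm_lt_one (x := ‖q‖) (by simpa using hq)
      exact this.comp (tendsto_add_atTop_nat 1)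
    filter_upwards [htend.eventually_le_const (by norm_num : (0:ℝ) < 1/2)] with k hk
    have : (1 : ℂ) - q^(k+1) = 1 + (-(q^(k+1))) := by ring
    rw [this]
    have := Complex.norm_log_one_add_half_le_self (z := -(q^(k+1))) (by simpa [norm_pow] using hk)
    simpa [norm_pow] using this

lemma tendsto_qp (hq : ‖q‖ < 1) : Tendsto (fun N => qp q N) atTop (𝓝 (qpInf q)) :=
  (multipliable hq).hasProd.tendsto_prod_nat

lemma qpInf_lower (hq : ‖q‖ < 1) : cLow q ≤ ‖qpInf q‖ :=
  ge_of_tendsto ((tendsto_qp hq).norm) (Eventually.of_forall (qp_lower hq))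

lemma qpInf_ne (hq : ‖q‖ < 1) : qpInf q ≠ 0 := by
  intro h
  have := qpInf_lower hq
  rw [h] at this; simp at this
  exact absurd this (not_le.2 (cLow_pos))


/-- Gaussian binomial `[m choose j]_q`, zero when `j > m`. -/
noncomputable def Bb (q : ℂ) (m j : ℕ) : ℂ :=
  if j ≤ m then qp q m / (qp q j * qp q (m - j)) else 0

lemma Bb_zero (hq : ‖q‖ < 1) (m : ℕ) : Bb q m 0 = 1 := by
  have h0 : qp q 0 = 1 := by simp [qp]
  simp [Bb, h0, div_self (qp_ne hq m)]

lemma Bb_self (hq : ‖q‖ < 1) (m : ℕ) : Bb q m m = 1 := by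
  have : qp q 0 = 1 := by simp [qp]
  simp [Bb, this, div_self (qp_ne hq m)]

lemma Bb_of_gt {m j : ℕ} (h : m < j) : Bb q m j = 0 := by
  simp [Bb, not_le.2 h]

lemma Bb_symm (hq : ‖q‖ < 1) {m j : ℕ} (h : j ≤ m) : Bb q m (m - j) = Bb q m j := by
  have h2 : m - (m - j) = j := by omega
  simp only [Bb, if_pos h, if_pos (Nat.sub_le m j), h2]
  rw [mul_comm]

lemma pascal (hq : ‖q‖ < 1) (m j : ℕ) :
    Bb q (m+1) (j+1) = Bb q m j + q ^ (j+1) * Bb q m (j+1) := by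
  rcases le_or_gt (j+1) m with h | h
  · have hj : j ≤ m := by omega
    have hj1 : j + 1 ≤ m + 1 := by omega
    simp only [Bb, if_pos h, if_pos hj, if_pos hj1]
    have e0 : m + 1 - (j+1) = m - j := by omega
    have e1 : qp q (m+1) = qp q m * (1 - q^(m+1)) := qp_succ m
    have e2 : qp q (j+1) = qp q j * (1 - q^(j+1)) := qp_succ j
    have e3 : qp q (m-j) = qp q (m - (j+1)) * (1 - q^(m-j)) := by
      have h4 : m - j = (m - (j+1)) + 1 := by omega
      have h5 : (m - (j+1)) + 1 = m - j := by omega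
      rw [h4, qp_succ, h5]
    have hqq : q^(j+1) * q^(m-j) = q^(m+1) := by
      rw [← pow_add]
      congr 1
      omega
    have e4 : (1 : ℂ) - q^(m+1) = (1 - q^(j+1)) + q^(j+1) * (1 - q^(m-j)) := by
      linear_combination hqq
    rw [e0, e1, e2, e3, e4]
    have n1 := qp_ne hq m
    have n2 := qp_ne hq j
    have n3 := qp_ne hq (m - (j+1))
    have n4 := one_sub_ne hq j
    have n5 : (1:ℂ) - q^(m-j) ≠ 0 := by
      have : m - j = (m - j - 1) + 1 := by omega
      rw [this]; exact one_sub_ne hq _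
    field_simp
  · rcases Nat.lt_or_ge m (j+1+1) with h2 | h2
    · -- j + 1 = m + 1 or j + 1 > m + 1; here m ≤ j + 1 and m < j+1 so m ≤ j
      rcases Nat.eq_or_lt_of_le (Nat.succ_le_of_lt h) with h3 | h3
      · -- m = j + 1? no: h : m < j+1 means m ≤ j. succ_le_of_lt h : m + 1 ≤ j + 1
        -- h3 : m + 1 = j + 1, so m = j
        have hm : m = j := by omega
        subst hm
        rw [Bb_self hq, Bb_self hq, Bb_of_gt (by omega)]
        ring
      · -- m + 1 < j + 1, so m < j
        rw [Bb_of_gt (by omega), Bb_of_gt (by omega), Bb_of_gt (by omega)]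
        ring
    · omega

lemma vdm (hq : ‖q‖ < 1) (m n k : ℕ) :
    ∑ j ∈ range (k+1), q ^ ((m-j)*(k-j)) * Bb q m j * Bb q n (k-j) = Bb q (m+n) k := by
  induction m generalizing k with
  | zero =>
    rw [Finset.sum_eq_single_of_mem 0 (by simp)]
    · simp [Bb_zero hq]
    · intro j _ hj
      have : 0 < j := Nat.pos_of_ne_zero hj
      rw [Bb_of_gt this]
      ring
  | succ m IH =>
    cases k with
    | zero =>
      simp [Bb_zero hq]
    | succ k' =>
      rw [Finset.sum_range_succ']
      have expand : ∀ j ∈ range (k'+1),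
          q ^ ((m+1-(j+1))*(k'+1-(j+1))) * Bb q (m+1) (j+1) * Bb q n (k'+1-(j+1)) =
          q ^ ((m-j)*(k'-j)) * Bb q m j * Bb q n (k'-j)
          + q^(k'+1) * (q ^ ((m-(j+1))*(k'+1-(j+1))) * Bb q m (j+1) * Bb q n (k'+1-(j+1))) := by
        intro j hj
        have hjk : j ≤ k' := by simpa using Nat.lt_succ_iff.1 (Finset.mem_range.1 hj)
        have e0 : m + 1 - (j+1) = m - j := by omega
        have e1 : k' + 1 - (j+1) = k' - j := by omega
        rw [e0, e1, pascal hq]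
        rcases le_or_gt (j+1) m with h | h
        · have hexp : (m-j)*(k'-j) + (j+1) = (m-(j+1))*(k'-j) + (k'+1) := by
            have h1 : m - j = (m - (j+1)) + 1 := by omega
            rw [h1, add_one_mul]
            omega
          have : q ^ ((m-j)*(k'-j)) * (q^(j+1) * Bb q m (j+1))
              = q^(k'+1) * (q ^ ((m-(j+1))*(k'-j)) * Bb q m (j+1)) := by
            rw [← mul_assoc, ← pow_add, hexp, pow_add]
            ring
          calc q ^ ((m-j)*(k'-j)) * (Bb q m j + q^(j+1) * Bb q m (j+1)) * Bb q n (k'-j)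
              = q ^ ((m-j)*(k'-j)) * Bb q m j * Bb q n (k'-j)
                + (q ^ ((m-j)*(k'-j)) * (q^(j+1) * Bb q m (j+1))) * Bb q n (k'-j) := by ring
          _ = _ := by rw [this]; ring
        · rw [Bb_of_gt h]
          ring
      rw [Finset.sum_congr rfl expand, Finset.sum_add_distrib, IH k', ← Finset.mul_sum]
      have key : q^(k'+1) * Bb q (m+n) (k'+1)
          = q^(k'+1) * (∑ j ∈ range (k'+1),
              q ^ ((m-(j+1))*(k'+1-(j+1))) * Bb q m (j+1) * Bb q n (k'+1-(j+1)))
            + q ^ ((m+1-0)*(k'+1-0)) * Bb q (m+1) 0 * Bb q n (k'+1-0) := by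
        rw [← IH (k'+1), Finset.sum_range_succ', mul_add]
        congr 1
        simp only [Nat.sub_zero, Bb_zero hq, mul_one]
        rw [← mul_assoc, ← pow_add]
        congr 2
        ring
      have hmn : m + 1 + n = (m + n) + 1 := by omega
      rw [hmn, pascal hq (m+n) k']
      linear_combination -key

lemma durfee (hq : ‖q‖ < 1) (a N : ℕ) :
    ∑ n ∈ range (N+1), q ^ (n*(n+a)) * Bb q N n * Bb q (N+a) (n+a)
      = Bb q (N+(N+a)) (N+a) := by
  set T : ℕ → ℂ := fun j => q ^ ((N-j)*(N+a-j)) * Bb q N j * Bb q (N+a) (N+a-j) with hT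
  have step1 : ∀ n ∈ range (N+1),
      q ^ (n*(n+a)) * Bb q N n * Bb q (N+a) (n+a) = T (a + (N+1) - 1 - (a + n)) := by
    intro n hn
    have hn' : n ≤ N := by simpa [Nat.lt_succ_iff] using hn
    have e1 : a + (N+1) - 1 - (a + n) = N - n := by omega
    rw [e1, hT]
    simp only
    have e2 : N - (N - n) = n := by omega
    have e3 : N + a - (N - n) = n + a := by omega
    rw [e2, e3, Bb_symm hq hn']
  rw [Finset.sum_congr rfl step1]
  have step2 : ∀ i ∈ range a, T (a + (N+1) - 1 - i) = 0 := by
    intro i hi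
    have hlt : N < a + (N+1) - 1 - i := by
      have := Finset.mem_range.1 hi; omega
    rw [hT]
    simp only
    rw [Bb_of_gt hlt]
    ring
  have h0 : ∑ i ∈ range (N+1), T (a + (N+1) - 1 - (a + i))
      = ∑ j ∈ range (a + (N+1)), T (a + (N+1) - 1 - j) := by
    rw [Finset.sum_range_add (fun j => T (a + (N+1) - 1 - j)) a (N+1),
      Finset.sum_eq_zero step2, zero_add]
  rw [h0]
  have hsize : a + (N+1) = N + a + 1 := by omega
  rw [hsize, Finset.sum_range_reflect]
  exact vdm hq N (N+a) (N+a)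

lemma Bb_norm_le (hq : ‖q‖ < 1) (m j : ℕ) :
    ‖Bb q m j‖ ≤ mUp q / (cLow q * cLow q) := by
  have hc := cLow_pos (q := q)
  have hM : 0 < mUp q := Real.exp_pos _
  rw [Bb]
  split_ifs with h
  · rw [norm_div, norm_mul]
    exact div_le_div₀ hM.le (qp_upper hq m) (by positivity)
      (mul_le_mul (qp_lower hq j) (qp_lower hq (m-j)) hc.le (norm_nonneg _))
  · simp only [norm_zero]
    positivity

lemma term_norm_le (hq : ‖q‖ < 1) (a N n : ℕ) :
    ‖(if n ≤ N then q ^ (n*(n+a)) * Bb q N n * Bb q (N+a) (n+a) else 0 : ℂ)‖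
      ≤ (mUp q / (cLow q * cLow q))^2 * ‖q‖^n := by
  have hc := cLow_pos (q := q)
  have hM : 0 < mUp q := Real.exp_pos _
  have h0 : (0:ℝ) ≤ ‖q‖ := norm_nonneg q
  split_ifs with h
  · rw [norm_mul, norm_mul, norm_pow]
    have hexp : n ≤ n * (n + a) := by
      rcases Nat.eq_zero_or_pos n with h1 | h1
      · simp [h1]
      · exact Nat.le_mul_of_pos_right n (by omega)
    have hpow : ‖q‖ ^ (n*(n+a)) ≤ ‖q‖ ^ n := pow_le_pow_of_le_one h0 hq.le hexp
    calc ‖q‖^(n*(n+a)) * ‖Bb q N n‖ * ‖Bb q (N+a) (n+a)‖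
        ≤ ‖q‖^n * (mUp q / (cLow q * cLow q)) * (mUp q / (cLow q * cLow q)) := by
          apply mul_le_mul (mul_le_mul hpow (Bb_norm_le hq N n) (norm_nonneg _) (by positivity))
            (Bb_norm_le hq (N+a) (n+a)) (norm_nonneg _) (by positivity)
    _ = (mUp q / (cLow q * cLow q))^2 * ‖q‖^n := by ring
  · simp only [norm_zero]
    positivity

lemma finite_id (hq : ‖q‖ < 1) (a N : ℕ) :
    ∑' n : ℕ, (if n ≤ N then q ^ (n*(n+a)) * Bb q N n * Bb q (N+a) (n+a) else 0 : ℂ)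
      = qp q (N+(N+a)) / (qp q N * qp q (N+a)) := by
  rw [tsum_eq_sum (s := range (N+1)) (by
    intro n hn
    rw [if_neg]
    simpa [Nat.lt_succ_iff] using hn)]
  rw [Finset.sum_congr rfl (fun n hn => if_pos (by simpa [Nat.lt_succ_iff] using hn)),
    durfee hq a N, Bb, if_pos (by omega : N+a ≤ N+(N+a))]
  have e : N+(N+a)-(N+a) = N := by omega
  rw [e, mul_comm]

lemma tend_term (hq : ‖q‖ < 1) (a n : ℕ) :
    Tendsto (fun N => (if n ≤ N then q ^ (n*(n+a)) * Bb q N n * Bb q (N+a) (n+a) else 0 : ℂ))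
      atTop (𝓝 (q ^ (n*(n+a)) / (qp q n * qp q (n+a)))) := by
  have hP := tendsto_qp hq
  have hPn := qpInf_ne hq
  have hev : ∀ᶠ N in atTop, (if n ≤ N then q ^ (n*(n+a)) * Bb q N n * Bb q (N+a) (n+a) else 0 : ℂ)
      = q^(n*(n+a)) * (qp q N / (qp q n * qp q (N-n)))
        * (qp q (N+a) / (qp q (n+a) * qp q (N-n))) := by
    filter_upwards [eventually_ge_atTop n] with N hN
    have e : N + a - (n + a) = N - n := by omega
    rw [if_pos hN, Bb, Bb, if_pos hN, if_pos (by omega : n + a ≤ N + a), e]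
  rw [tendsto_congr' hev]
  have h1 : Tendsto (fun N : ℕ => qp q (N - n)) atTop (𝓝 (qpInf q)) :=
    hP.comp (tendsto_sub_atTop_nat n)
  have h2 : Tendsto (fun N : ℕ => qp q (N + a)) atTop (𝓝 (qpInf q)) :=
    hP.comp (tendsto_add_atTop_nat a)
  have hd1 : qp q n * qpInf q ≠ 0 := mul_ne_zero (qp_ne hq n) hPn
  have hd2 : qp q (n+a) * qpInf q ≠ 0 := mul_ne_zero (qp_ne hq (n+a)) hPn
  have hL : Tendsto (fun N : ℕ => q^(n*(n+a)) * (qp q N / (qp q n * qp q (N-n)))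
      * (qp q (N+a) / (qp q (n+a) * qp q (N-n)))) atTop
      (𝓝 (q^(n*(n+a)) * (qpInf q / (qp q n * qpInf q)) * (qpInf q / (qp q (n+a) * qpInf q)))) :=
    ((tendsto_const_nhds.mul (hP.div (tendsto_const_nhds.mul h1) hd1)).mul
      (h2.div (tendsto_const_nhds.mul h1) hd2))
  have hn1 := qp_ne hq n
  have hn2 := qp_ne hq (n+a)
  have heq : q^(n*(n+a)) / (qp q n * qp q (n+a))
      = q^(n*(n+a)) * (qpInf q / (qp q n * qpInf q)) * (qpInf q / (qp q (n+a) * qpInf q)) := by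
    field_simp
  rw [heq]
  exact hL

lemma main_nat (hq : ‖q‖ < 1) (a : ℕ) :
    ∑' n : ℕ, q ^ (n*(n+a)) / (qp q n * qp q (n+a)) = 1 / qpInf q := by
  have hPn := qpInf_ne hq
  have hsum : Summable (fun n : ℕ => (mUp q / (cLow q * cLow q))^2 * ‖q‖^n) :=
    (summable_geometric_of_lt_one (norm_nonneg q) hq).mul_left _
  have hdom := tendsto_tsum_of_dominated_convergence (𝓕 := atTop)
    (f := fun N n => (if n ≤ N then q ^ (n*(n+a)) * Bb q N n * Bb q (N+a) (n+a) else 0 : ℂ))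
    (g := fun n => q ^ (n*(n+a)) / (qp q n * qp q (n+a)))
    hsum (tend_term hq a) (Eventually.of_forall (fun N n => term_norm_le hq a N n))
  have hdom2 : Tendsto (fun N => qp q (N+(N+a)) / (qp q N * qp q (N+a))) atTop
      (𝓝 (∑' n : ℕ, q ^ (n*(n+a)) / (qp q n * qp q (n+a)))) := by
    refine hdom.congr (fun N => ?_)
    exact finite_id hq a N
  have hP := tendsto_qp hq
  have h3 : Tendsto (fun N : ℕ => qp q (N+(N+a))) atTop (𝓝 (qpInf q)) := by
    refine hP.comp (tendsto_atTop_mono (fun N => ?_) tendsto_id)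
    simp only [id_eq]
    omega
  have h4 : Tendsto (fun N : ℕ => qp q (N + a)) atTop (𝓝 (qpInf q)) :=
    hP.comp (tendsto_add_atTop_nat a)
  have hR : Tendsto (fun N => qp q (N+(N+a)) / (qp q N * qp q (N+a))) atTop
      (𝓝 (qpInf q / (qpInf q * qpInf q))) :=
    h3.div (hP.mul h4) (mul_ne_zero hPn hPn)
  have := tendsto_nhds_unique hdom2 hR
  rw [this]
  field_simp

end AndrewsAux

open AndrewsAux

/-- For any integer `A`, `∑_{n ≥ 0, n+A ≥ 0} q^(n²+An)/((q)_n (q)_{n+A}) = 1/(q)_∞`. -/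
theorem andrews_lemma (q : ℂ) (hq : ‖q‖ < 1) (A : ℤ) :
    ∑' n : ℕ, (if (n : ℤ) + A < 0 then 0 else
      q ^ ((n * ((n : ℤ) + A)).toNat) / (qp q n * qp q ((n : ℤ) + A).toNat)) =
    1 / qpInf q := by
  rcases le_or_gt 0 A with hA | hA
  · obtain ⟨a, rfl⟩ := Int.eq_ofNat_of_zero_le hA
    rw [← main_nat hq a]
    refine tsum_congr (fun n => ?_)
    rw [if_neg (by omega)]
    rw [show (n:ℤ) * ((n:ℤ) + (a:ℕ)) = ((n*(n+a) : ℕ) : ℤ) by push_cast; ring,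
      show ((n:ℤ) + (a:ℕ)) = ((n+a : ℕ) : ℤ) by push_cast; ring,
      Int.toNat_natCast, Int.toNat_natCast]
  · obtain ⟨b, hb1, rfl⟩ : ∃ b : ℕ, 1 ≤ b ∧ A = -(b:ℤ) := ⟨(-A).toNat, by omega, by omega⟩
    rw [← main_nat hq b]
    have hsupp : Function.support (fun n : ℕ => (if (n : ℤ) + -(b:ℤ) < 0 then 0 else
        q ^ ((n * ((n : ℤ) + -(b:ℤ))).toNat) / (qp q n * qp q ((n : ℤ) + -(b:ℤ)).toNat) : ℂ))
        ⊆ Set.range (fun k : ℕ => k + b) := by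
      intro n hn
      rcases le_or_gt b n with h | h
      · refine ⟨n - b, ?_⟩
        simp only
        omega
      · exfalso
        apply hn
        simp only
        rw [if_pos (by omega)]
    have hshift := Function.Injective.tsum_eq (add_left_injective b) hsupp
    rw [← hshift]
    refine tsum_congr (fun k => ?_)
    rw [if_neg (by push_cast; omega)]
    rw [show ((k+b : ℕ):ℤ) * (((k+b : ℕ):ℤ) + -(b:ℤ)) = ((k*(k+b) : ℕ) : ℤ) by push_cast; ring,
      show (((k+b : ℕ):ℤ) + -(b:ℤ)) = ((k : ℕ) : ℤ) by push_cast; ring,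
      Int.toNat_natCast, Int.toNat_natCast, mul_comm (qp q (k+b)) (qp q k)]
end

section
/- The double sum over n, k ≥ 0 of (-1)^n q^(k(k+1) + n(n+1)/2) (q;q)_n/((q;q)_k (q;q)_{n-k}) equals the sum over n ≥ 0 of q^(3n²+2n)(1 - q^(2n+1)), as formal power series in q (terms with n - k < 0 are 0). -/
open scoped BigOperators

namespace BB3

variable (q : ℂ)

lemma one_sub_pow_ne (hq : ‖q‖ < 1) (j : ℕ) : (1 : ℂ) - q ^ (j + 1) ≠ 0 := by
  intro h
  have h1 : q ^ (j + 1) = 1 := by linear_combination -h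
  have h2 : ‖q ^ (j + 1)‖ < 1 := by
    rw [norm_pow]
    exact pow_lt_one₀ (norm_nonneg q) hq j.succ_ne_zero
  rw [h1, norm_one] at h2
  exact lt_irrefl 1 h2

lemma qp_ne (hq : ‖q‖ < 1) (n : ℕ) : qp q n ≠ 0 :=
  Finset.prod_ne_zero_iff.2 fun j _ => one_sub_pow_ne q hq j

lemma qp_succ (n : ℕ) : qp q (n + 1) = qp q n * (1 - q ^ (n + 1)) :=
  Finset.prod_range_succ _ n

/-- Gaussian binomial as a ratio. -/
noncomputable def B (n k : ℕ) : ℂ := qp q n / (qp q k * qp q (n - k))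

lemma B_zero (hq : ‖q‖ < 1) (n : ℕ) : B q n 0 = 1 := by
  simp [B, qp, div_self (qp_ne q hq n)]
  exact qp_ne q hq n

lemma B_self (hq : ‖q‖ < 1) (n : ℕ) : B q n n = 1 := by
  simp [B, qp]
  exact qp_ne q hq n

lemma pascal1 (hq : ‖q‖ < 1) (n k : ℕ) (h : k + 1 ≤ n) :
    B q (n + 1) (k + 1) = B q n (k + 1) + q ^ (n - k) * B q n k := by
  obtain ⟨i, rfl⟩ : ∃ i, n = k + 1 + i := ⟨n - (k + 1), by omega⟩
  unfold B
  rw [show k + 1 + i + 1 - (k + 1) = i + 1 by omega,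
    show k + 1 + i - (k + 1) = i by omega,
    show k + 1 + i - k = i + 1 by omega]
  rw [show k + 1 + i + 1 = (k + 1 + i) + 1 from rfl, qp_succ q (k + 1 + i)]
  rw [show qp q (i + 1) = qp q i * (1 - q ^ (i + 1)) from qp_succ q i]
  have h1 := qp_ne q hq (k + 1)
  have h2 := qp_ne q hq i
  have h3 := one_sub_pow_ne q hq i
  have h4 := qp_ne q hq (k + 1 + i)
  have h5 := qp_ne q hq k
  have h6 : qp q (k + 1) = qp q k * (1 - q ^ (k + 1)) := qp_succ q k
  field_simp
  rw [h6]
  ring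

lemma pascal2 (hq : ‖q‖ < 1) (n k : ℕ) (h : k + 1 ≤ n) :
    B q (n + 1) (k + 1) = B q n k + q ^ (k + 1) * B q n (k + 1) := by
  obtain ⟨i, rfl⟩ : ∃ i, n = k + 1 + i := ⟨n - (k + 1), by omega⟩
  unfold B
  rw [show k + 1 + i + 1 - (k + 1) = i + 1 by omega,
    show k + 1 + i - (k + 1) = i by omega,
    show k + 1 + i - k = i + 1 by omega]
  rw [show k + 1 + i + 1 = (k + 1 + i) + 1 from rfl, qp_succ q (k + 1 + i)]
  rw [show qp q (i + 1) = qp q i * (1 - q ^ (i + 1)) from qp_succ q i]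
  have h1 := qp_ne q hq (k + 1)
  have h2 := qp_ne q hq i
  have h3 := one_sub_pow_ne q hq i
  have h4 := qp_ne q hq (k + 1 + i)
  have h5 := qp_ne q hq k
  have h6 : qp q (k + 1) = qp q k * (1 - q ^ (k + 1)) := qp_succ q k
  field_simp
  rw [h6]
  ring


/-- `a n b = ∑_{k=0}^n q^(k²+bk) [n;k]_q` -/
noncomputable def a (n b : ℕ) : ℂ := ∑ k ∈ Finset.range (n + 1), q ^ (k * k + b * k) * B q n k

lemma a_zero (hq : ‖q‖ < 1) (b : ℕ) : a q 0 b = 1 := by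
  simp [a, B_zero q hq]

lemma a_one (hq : ‖q‖ < 1) (b : ℕ) : a q 1 b = 1 + q ^ (b + 1) := by
  rw [a, Finset.sum_range_succ, Finset.sum_range_one]
  rw [B_zero q hq, B_self q hq]
  ring_nf

lemma rec1 (hq : ‖q‖ < 1) (n b : ℕ) :
    a q (n + 1) b = a q n b + q ^ (n + 1 + b) * a q n (b + 1) := by
  have key : ∀ j ∈ Finset.range n,
      q ^ ((j+1) * (j+1) + b * (j+1)) * B q (n + 1) (j + 1)
        = q ^ ((j+1) * (j+1) + b * (j+1)) * B q n (j + 1)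
          + q ^ (n + 1 + b) * (q ^ (j * j + (b+1) * j) * B q n j) := by
    intro j hj
    rw [Finset.mem_range] at hj
    rw [pascal1 q hq n j (by omega)]
    have he : (j+1) * (j+1) + b * (j+1) + (n - j) = (n + 1 + b) + (j * j + (b+1) * j) := by
      have : n - j + j = n := by omega
      nlinarith [this]
    rw [mul_add, ← mul_assoc, ← pow_add, he, pow_add]
    ring
  rw [a, Finset.sum_range_succ' _ (n + 1), Finset.sum_range_succ]
  rw [Finset.sum_congr rfl key, Finset.sum_add_distrib]
  have e0 : q ^ (0 * 0 + b * 0) * B q (n + 1) 0 = q ^ (0 * 0 + b * 0) * B q n 0 := by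
    rw [B_zero q hq, B_zero q hq]
  have etop : q ^ ((n+1) * (n+1) + b * (n+1)) * B q (n+1) (n+1)
      = q ^ (n + 1 + b) * (q ^ (n * n + (b+1) * n) * B q n n) := by
    rw [B_self q hq, B_self q hq]
    rw [mul_one, mul_one, ← pow_add]
    congr 1
    ring
  rw [etop, e0]
  have h1 : a q n b = (∑ j ∈ Finset.range n, q ^ ((j+1) * (j+1) + b * (j+1)) * B q n (j+1))
      + q ^ (0 * 0 + b * 0) * B q n 0 := by
    rw [a, Finset.sum_range_succ' _ n]
  have h2 : a q n (b+1) = (∑ j ∈ Finset.range n, q ^ (j * j + (b+1) * j) * B q n j)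
      + q ^ (n * n + (b+1) * n) * B q n n := by
    rw [a, Finset.sum_range_succ]
  rw [h1, h2, ← Finset.mul_sum]
  ring

lemma rec2 (hq : ‖q‖ < 1) (n b : ℕ) :
    a q (n + 1) b = a q n (b + 1) + q ^ (b + 1) * a q n (b + 2) := by
  have key : ∀ j ∈ Finset.range n,
      q ^ ((j+1) * (j+1) + b * (j+1)) * B q (n + 1) (j + 1)
        = q ^ (b + 1) * (q ^ (j * j + (b+2) * j) * B q n j)
          + q ^ ((j+1) * (j+1) + (b+1) * (j+1)) * B q n (j + 1) := by
    intro j hj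
    rw [Finset.mem_range] at hj
    rw [pascal2 q hq n j (by omega)]
    have he1 : (j+1) * (j+1) + b * (j+1) = (b + 1) + (j * j + (b+2) * j) := by ring
    have he2 : (j+1) * (j+1) + b * (j+1) + (j + 1) = (j+1) * (j+1) + (b+1) * (j+1) := by ring
    rw [mul_add, ← mul_assoc, ← pow_add, he2, he1, pow_add]
    ring
  rw [a, Finset.sum_range_succ' _ (n + 1), Finset.sum_range_succ]
  rw [Finset.sum_congr rfl key, Finset.sum_add_distrib]
  have e0 : q ^ (0 * 0 + b * 0) * B q (n + 1) 0 = q ^ (0 * 0 + (b+1) * 0) * B q n 0 := by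
    rw [B_zero q hq, B_zero q hq]
    norm_num
  have etop : q ^ ((n+1) * (n+1) + b * (n+1)) * B q (n+1) (n+1)
      = q ^ (b + 1) * (q ^ (n * n + (b+2) * n) * B q n n) := by
    rw [B_self q hq, B_self q hq]
    rw [mul_one, mul_one, ← pow_add]
    congr 1
    ring
  rw [etop, e0]
  have h1 : a q n (b+1) = (∑ j ∈ Finset.range n, q ^ ((j+1) * (j+1) + (b+1) * (j+1)) * B q n (j+1))
      + q ^ (0 * 0 + (b+1) * 0) * B q n 0 := by
    rw [a, Finset.sum_range_succ' _ n]
  have h2 : a q n (b+2) = (∑ j ∈ Finset.range n, q ^ (j * j + (b+2) * j) * B q n j)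
      + q ^ (n * n + (b+2) * n) * B q n n := by
    rw [a, Finset.sum_range_succ]
  rw [h1, h2, ← Finset.mul_sum]
  ring


/-- tail of the correction sequence -/
noncomputable def tl (n t : ℕ) : ℂ :=
  ∑ j ∈ Finset.Ico t ((n + 1) / 2), q ^ (j * j + j) * a q (n - 1 - 2 * j) (2 * j + 2)

lemma tl_empty (n t : ℕ) (h : (n + 1) / 2 ≤ t) : tl q n t = 0 := by
  rw [tl, Finset.Ico_eq_empty (by omega), Finset.sum_empty]

lemma tl_peel (n t : ℕ) (h : t < (n + 1) / 2) :
    tl q n t = q ^ (t * t + t) * a q (n - 1 - 2 * t) (2 * t + 2) + tl q n (t + 1) := by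
  rw [tl, tl, Finset.sum_eq_sum_Ico_succ_bot h]

lemma L (hq : ‖q‖ < 1) : ∀ d t : ℕ,
    q ^ (t * t + t) * a q d (2 * t + 1)
      = tl q (2 * t + d - 1) t + q ^ (2 * t + d + 1) * tl q (2 * t + d) t
        + q ^ (((2 * t + d) / 2) * ((2 * t + d) / 2 + 1)) := by
  intro d
  induction d using Nat.strong_induction_on with
  | _ d ih =>
    match d with
    | 0 =>
      intro t
      rw [a_zero q hq, tl_empty q _ t (by omega), tl_empty q _ t (by omega)]
      rw [show (2 * t + 0) / 2 = t by omega]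
      ring_nf
    | 1 =>
      intro t
      rw [a_one q hq, tl_empty q _ t (by omega)]
      rw [tl_peel q _ t (by omega), tl_empty q _ (t + 1) (by omega)]
      rw [show 2 * t + 1 - 1 - 2 * t = 0 by omega, a_zero q hq]
      rw [show (2 * t + 1) / 2 = t by omega]
      ring
    | (e + 2) =>
      intro t
      have IH := ih e (by omega) (t + 1)
      rw [show 2 * (t + 1) + e - 1 = 2 * t + (e + 2) - 1 by omega,
        show 2 * (t + 1) + e = 2 * t + (e + 2) by omega,
        show 2 * (t + 1) + 1 = 2 * t + 3 by omega] at IH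
      rw [show e + 2 = (e + 1) + 1 from rfl, rec1 q hq (e + 1) (2 * t + 1)]
      rw [show (e + 1) = e + 1 from rfl, rec2 q hq e (2 * t + 1)]
      rw [tl_peel q (2 * t + (e + 2) - 1) t (by omega),
        tl_peel q (2 * t + (e + 2)) t (by omega)]
      rw [show 2 * t + (e + 2) - 1 - 1 - 2 * t = e by omega,
        show 2 * t + (e + 2) - 1 - 2 * t = e + 1 by omega]
      rw [show 2 * t + 1 + 1 = 2 * t + 2 by omega,
        show 2 * t + 1 + 2 = 2 * t + 3 by omega,
        show e + 1 + 1 + (2 * t + 1) = 2 * t + (e + 2) + 1 by omega]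
      linear_combination IH

/-- uniform constant -/
noncomputable def D (q : ℂ) : ℝ := Real.exp (‖q‖ / ((1 - ‖q‖) * (1 - ‖q‖)))

lemma invfac (hq : ‖q‖ < 1) {y : ℝ} (hy0 : 0 ≤ y) (hyx : y ≤ ‖q‖) :
    (1 - y)⁻¹ ≤ Real.exp (y / (1 - ‖q‖)) := by
  have hx1 : (0:ℝ) < 1 - ‖q‖ := by linarith
  have hy1 : (0:ℝ) < 1 - y := by linarith
  have h1 : (1 - y)⁻¹ = 1 + y / (1 - y) := by field_simp; ring
  have h2 : 1 + y / (1 - y) ≤ Real.exp (y / (1 - y)) := by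
    have := Real.add_one_le_exp (y / (1 - y))
    linarith
  have h3 : y / (1 - y) ≤ y / (1 - ‖q‖) := by
    apply div_le_div_of_nonneg_left hy0 hx1
    linarith
  calc (1 - y)⁻¹ = 1 + y / (1 - y) := h1
    _ ≤ Real.exp (y / (1 - y)) := h2
    _ ≤ Real.exp (y / (1 - ‖q‖)) := Real.exp_le_exp.2 h3

lemma geom_bound (hq : ‖q‖ < 1) (n : ℕ) :
    ∑ k ∈ Finset.range n, ‖q‖ ^ (k + 1) ≤ ‖q‖ / (1 - ‖q‖) := by
  have hx0 : (0:ℝ) ≤ ‖q‖ := norm_nonneg q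
  have hx1 : (0:ℝ) < 1 - ‖q‖ := by linarith
  have h1 : ∑ k ∈ Finset.range n, ‖q‖ ^ (k + 1) = ‖q‖ * ∑ k ∈ Finset.range n, ‖q‖ ^ k := by
    rw [Finset.mul_sum]
    exact Finset.sum_congr rfl fun k _ => by rw [pow_succ, mul_comm]
  have h2 : ∑ k ∈ Finset.range n, ‖q‖ ^ k ≤ (1 - ‖q‖)⁻¹ := by
    rw [← one_div]
    rw [le_div_iff₀ hx1]
    have := geom_sum_mul (‖q‖) n
    have hp : (0:ℝ) ≤ ‖q‖ ^ n := pow_nonneg hx0 n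
    nlinarith [this]
  rw [h1, div_eq_mul_inv]
  exact mul_le_mul_of_nonneg_left h2 hx0

lemma prod_inv_bound (hq : ‖q‖ < 1) (n : ℕ) :
    ∏ k ∈ Finset.range n, (1 - ‖q‖ ^ (k + 1))⁻¹ ≤ D q := by
  have hx0 : (0:ℝ) ≤ ‖q‖ := norm_nonneg q
  have hx1 : (0:ℝ) < 1 - ‖q‖ := by linarith
  have hyk : ∀ k : ℕ, ‖q‖ ^ (k + 1) ≤ ‖q‖ := fun k =>
    pow_le_of_le_one hx0 hq.le k.succ_ne_zero
  have hyk0 : ∀ k : ℕ, (0:ℝ) ≤ ‖q‖ ^ (k + 1) := fun k => pow_nonneg hx0 _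
  calc ∏ k ∈ Finset.range n, (1 - ‖q‖ ^ (k + 1))⁻¹
      ≤ ∏ k ∈ Finset.range n, Real.exp (‖q‖ ^ (k + 1) / (1 - ‖q‖)) := by
        apply Finset.prod_le_prod
        · intro k _
          apply inv_nonneg.2
          have := hyk k; linarith
        · intro k _
          exact invfac q hq (hyk0 k) (hyk k)
    _ = Real.exp (∑ k ∈ Finset.range n, ‖q‖ ^ (k + 1) / (1 - ‖q‖)) := by
        rw [Real.exp_sum]
    _ ≤ D q := by
        rw [D]
        apply Real.exp_le_exp.2
        rw [← Finset.sum_div]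
        rw [← div_div]
        have := geom_bound q hq n
        gcongr

lemma norm_one_sub_pow_ge (hq : ‖q‖ < 1) (k : ℕ) :
    1 - ‖q‖ ^ (k + 1) ≤ ‖1 - q ^ (k + 1)‖ := by
  have h := norm_sub_norm_le (1 : ℂ) (q ^ (k + 1))
  rw [norm_one, norm_pow] at h
  exact h

lemma norm_qp_le (hq : ‖q‖ < 1) (n : ℕ) : ‖qp q n‖ ≤ D q := by
  have hx0 : (0:ℝ) ≤ ‖q‖ := norm_nonneg q
  calc ‖qp q n‖ = ∏ k ∈ Finset.range n, ‖1 - q ^ (k + 1)‖ := by rw [qp, norm_prod]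
    _ ≤ ∏ k ∈ Finset.range n, (1 - ‖q‖ ^ (k + 1))⁻¹ := by
        apply Finset.prod_le_prod (fun k _ => norm_nonneg _)
        intro k _
        have h1 : ‖(1:ℂ) - q ^ (k + 1)‖ ≤ 1 + ‖q‖ ^ (k + 1) := by
          have := norm_sub_le (1 : ℂ) (q ^ (k + 1))
          rw [norm_one, norm_pow] at this
          exact this
        have hy : ‖q‖ ^ (k + 1) ≤ ‖q‖ := pow_le_of_le_one hx0 hq.le k.succ_ne_zero
        have hy0 : (0:ℝ) ≤ ‖q‖ ^ (k + 1) := pow_nonneg hx0 _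
        have h3 : (0:ℝ) < 1 - ‖q‖ ^ (k + 1) := by nlinarith
        have h5 : (1 - ‖q‖ ^ (k + 1))⁻¹ = 1 + ‖q‖ ^ (k + 1) / (1 - ‖q‖ ^ (k + 1)) := by
          generalize ‖q‖ ^ (k + 1) = y at h3 ⊢
          field_simp; ring
        have h6 : ‖q‖ ^ (k + 1) ≤ ‖q‖ ^ (k + 1) / (1 - ‖q‖ ^ (k + 1)) := by
          rw [le_div_iff₀ h3]
          nlinarith
        linarith
    _ ≤ D q := prod_inv_bound q hq n

lemma norm_qp_inv_le (hq : ‖q‖ < 1) (n : ℕ) : ‖(qp q n)⁻¹‖ ≤ D q := by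
  have hx0 : (0:ℝ) ≤ ‖q‖ := norm_nonneg q
  calc ‖(qp q n)⁻¹‖ = ∏ k ∈ Finset.range n, ‖1 - q ^ (k + 1)‖⁻¹ := by
        rw [qp, ← Finset.prod_inv_distrib, norm_prod]
        exact Finset.prod_congr rfl fun k _ => norm_inv _
    _ ≤ ∏ k ∈ Finset.range n, (1 - ‖q‖ ^ (k + 1))⁻¹ := by
        apply Finset.prod_le_prod (fun k _ => by positivity)
        intro k _
        have hy : ‖q‖ ^ (k + 1) ≤ ‖q‖ := pow_le_of_le_one hx0 hq.le k.succ_ne_zero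
        have h0 : (0:ℝ) < 1 - ‖q‖ ^ (k + 1) := by nlinarith
        exact inv_anti₀ h0 (norm_one_sub_pow_ge q hq k)
    _ ≤ D q := prod_inv_bound q hq n

lemma norm_B_le (hq : ‖q‖ < 1) (n k : ℕ) : ‖B q n k‖ ≤ D q ^ 3 := by
  have h1 := norm_qp_le q hq n
  have h2 := norm_qp_inv_le q hq k
  have h3 := norm_qp_inv_le q hq (n - k)
  have hD : (0:ℝ) ≤ D q := Real.exp_nonneg _
  rw [B, div_eq_mul_inv, mul_inv]
  calc ‖qp q n * ((qp q k)⁻¹ * (qp q (n-k))⁻¹)‖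
      = ‖qp q n‖ * (‖(qp q k)⁻¹‖ * ‖(qp q (n-k))⁻¹‖) := by rw [norm_mul, norm_mul]
    _ ≤ D q * (D q * D q) := by
        apply mul_le_mul h1 _ (by positivity) hD
        exact mul_le_mul h2 h3 (norm_nonneg _) hD
    _ = D q ^ 3 := by ring

lemma norm_a_le (hq : ‖q‖ < 1) (n b : ℕ) : ‖a q n b‖ ≤ (n + 1) * D q ^ 3 := by
  have hD : (0:ℝ) ≤ D q := Real.exp_nonneg _
  calc ‖a q n b‖ ≤ ∑ k ∈ Finset.range (n + 1), ‖q ^ (k * k + b * k) * B q n k‖ :=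
        norm_sum_le _ _
    _ ≤ ∑ k ∈ Finset.range (n + 1), D q ^ 3 := by
        apply Finset.sum_le_sum
        intro k _
        rw [norm_mul]
        have h1 : ‖q ^ (k * k + b * k)‖ ≤ 1 := by
          rw [norm_pow]
          exact pow_le_one₀ (norm_nonneg q) hq.le
        have h2 := norm_B_le q hq n k
        calc ‖q ^ (k * k + b * k)‖ * ‖B q n k‖ ≤ 1 * (D q ^ 3) :=
              mul_le_mul h1 h2 (norm_nonneg _) zero_le_one
          _ = D q ^ 3 := one_mul _
    _ = (n + 1) * D q ^ 3 := by
        rw [Finset.sum_const, Finset.card_range, nsmul_eq_mul]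
        push_cast
        ring

lemma norm_tl_le (hq : ‖q‖ < 1) (n : ℕ) : ‖tl q n 0‖ ≤ (n + 1) ^ 2 * D q ^ 3 := by
  have hD : (0:ℝ) ≤ D q := Real.exp_nonneg _
  calc ‖tl q n 0‖ ≤ ∑ j ∈ Finset.Ico 0 ((n + 1) / 2),
        ‖q ^ (j * j + j) * a q (n - 1 - 2 * j) (2 * j + 2)‖ := norm_sum_le _ _
    _ ≤ ∑ j ∈ Finset.Ico 0 ((n + 1) / 2), ((n + 1) * D q ^ 3) := by
        apply Finset.sum_le_sum
        intro j _
        rw [norm_mul]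
        have h1 : ‖q ^ (j * j + j)‖ ≤ 1 := by
          rw [norm_pow]; exact pow_le_one₀ (norm_nonneg q) hq.le
        have h2 : ‖a q (n - 1 - 2 * j) (2 * j + 2)‖ ≤ (n + 1) * D q ^ 3 := by
          refine (norm_a_le q hq _ _).trans ?_
          have : (n - 1 - 2 * j) + 1 ≤ n + 1 := by omega
          apply mul_le_mul_of_nonneg_right _ (by positivity)
          exact_mod_cast this
        calc ‖q ^ (j * j + j)‖ * ‖a q (n - 1 - 2 * j) (2 * j + 2)‖
            ≤ 1 * ((n + 1) * D q ^ 3) := mul_le_mul h1 h2 (norm_nonneg _) zero_le_one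
          _ = (n + 1) * D q ^ 3 := one_mul _
    _ ≤ (n + 1) ^ 2 * D q ^ 3 := by
        rw [Finset.sum_const, nsmul_eq_mul]
        have hcard : (Finset.Ico 0 ((n + 1) / 2)).card ≤ n + 1 := by
          rw [Nat.card_Ico]
          omega
        have h7 : ((Finset.Ico 0 ((n + 1) / 2)).card : ℝ) ≤ ((n + 1 : ℕ) : ℝ) :=
          Nat.cast_le.2 hcard
        push_cast at h7
        have h8 : (0:ℝ) ≤ ((Finset.Ico 0 ((n + 1) / 2)).card : ℝ) := Nat.cast_nonneg _
        have h9 := mul_le_mul_of_nonneg_right h7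
          (by positivity : (0:ℝ) ≤ ((n:ℝ) + 1) * D q ^ 3)
        nlinarith [h9]

noncomputable def A (n : ℕ) : ℂ := (-1) ^ n * q ^ (n * (n + 1) / 2) * a q n 1
noncomputable def R (n : ℕ) : ℂ := (-1) ^ n * q ^ (n * (n + 1) / 2 + (n / 2) * (n / 2 + 1))
noncomputable def G (n : ℕ) : ℂ := (-1) ^ n * q ^ (n * (n + 1) / 2) * tl q (n - 1) 0

lemma T_even (n : ℕ) : n * (n + 1) % 2 = 0 := Nat.even_iff.1 (Nat.even_mul_succ_self n)

lemma T_succ (n : ℕ) : (n + 1) * (n + 1 + 1) / 2 = n * (n + 1) / 2 + (n + 1) := by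
  have h1 : (n + 1) * (n + 1 + 1) = n * (n + 1) + 2 * (n + 1) := by ring
  have h2 := T_even n
  obtain ⟨u, hu⟩ : ∃ u, n * (n + 1) = u := ⟨_, rfl⟩
  rw [hu] at h1 h2 ⊢
  omega

lemma T_ge (n : ℕ) : n ≤ n * (n + 1) / 2 := by
  have h1 : n * 2 ≤ n * (n + 1) := by
    cases n with
    | zero => simp
    | succ k => exact Nat.mul_le_mul (le_refl _) (by omega)
  have h2 := T_even n
  obtain ⟨u, hu⟩ : ∃ u, n * (n + 1) = u := ⟨_, rfl⟩
  rw [hu] at h1 h2 ⊢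
  omega

lemma crux (hq : ‖q‖ < 1) (n : ℕ) :
    a q n 1 = tl q (n - 1) 0 + q ^ (n + 1) * tl q n 0 + q ^ ((n / 2) * (n / 2 + 1)) := by
  have h := L q hq n 0
  simpa using h

lemma step (hq : ‖q‖ < 1) (n : ℕ) : A q n - R q n = G q n - G q (n + 1) := by
  rw [A, R, G, G, crux q hq n]
  rw [show (n + 1) - 1 = n by omega]
  rw [T_succ, pow_succ (-1 : ℂ) n]
  rw [pow_add, pow_add]
  ring

lemma G_zero : G q 0 = 0 := by
  simp [G, tl]

lemma partial_sum (hq : ‖q‖ < 1) (N : ℕ) :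
    ∑ n ∈ Finset.range N, A q n = (∑ n ∈ Finset.range N, R q n) - G q N := by
  have h : ∑ n ∈ Finset.range N, (A q n - R q n) = G q 0 - G q N :=
    (Finset.sum_congr rfl fun n _ => step q hq n).trans (Finset.sum_range_sub' (G q) N)
  rw [Finset.sum_sub_distrib, G_zero] at h
  linear_combination h

lemma norm_pow_T_le (hq : ‖q‖ < 1) {e n : ℕ} (h : n ≤ e) : ‖q ^ e‖ ≤ ‖q‖ ^ n := by
  rw [norm_pow]
  exact pow_le_pow_of_le_one (norm_nonneg q) hq.le h

lemma hmaj (hq : ‖q‖ < 1) : Summable (fun n : ℕ => ((n : ℝ) + 1) ^ 2 * ‖q‖ ^ n * D q ^ 3) := by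
  have hx : ‖(‖q‖ : ℝ)‖ < 1 := by rwa [Real.norm_eq_abs, abs_of_nonneg (norm_nonneg q)]
  have h1 := summable_pow_mul_geometric_of_norm_lt_one (R := ℝ) 2 hx
  have h2 := summable_pow_mul_geometric_of_norm_lt_one (R := ℝ) 1 hx
  have h3 := summable_pow_mul_geometric_of_norm_lt_one (R := ℝ) 0 hx
  have h4 : Summable (fun n : ℕ => ((n : ℝ) + 1) ^ 2 * ‖q‖ ^ n) := by
    have := (h1.add ((h2.mul_left 2).add h3))
    apply this.congr
    intro n
    simp only [pow_one, pow_zero]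
    ring
  simpa [mul_comm, mul_assoc] using h4.mul_right (D q ^ 3)

lemma hA (hq : ‖q‖ < 1) : Summable (A q) := by
  apply Summable.of_norm_bounded (hmaj q hq)
  intro n
  rw [A, norm_mul, norm_mul]
  have h1 : ‖(-1 : ℂ) ^ n‖ = 1 := by
    rw [norm_pow, norm_neg, norm_one, one_pow]
  rw [h1, one_mul]
  have h2 := norm_pow_T_le q hq (T_ge n)
  have h3 := norm_a_le q hq n 1
  have hb : (0:ℝ) ≤ ‖q‖ ^ n := by positivity
  calc ‖q ^ (n * (n + 1) / 2)‖ * ‖a q n 1‖ ≤ ‖q‖ ^ n * ((n + 1) * D q ^ 3) :=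
        mul_le_mul h2 h3 (norm_nonneg _) hb
    _ ≤ ((n : ℝ) + 1) ^ 2 * ‖q‖ ^ n * D q ^ 3 := by
        have hD : (0:ℝ) ≤ D q ^ 3 := pow_nonneg (Real.exp_nonneg _) 3
        have hn0 : (0:ℝ) ≤ (n : ℝ) := Nat.cast_nonneg n
        have key : ((n:ℝ) + 1) ≤ ((n:ℝ) + 1) ^ 2 := by nlinarith
        have h5 := mul_le_mul_of_nonneg_right key (mul_nonneg hb hD)
        nlinarith [h5]

lemma hR (hq : ‖q‖ < 1) : Summable (R q) := by
  apply Summable.of_norm_bounded (summable_geometric_of_lt_one (norm_nonneg q) hq)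
  intro n
  rw [R, norm_mul]
  have h1 : ‖(-1 : ℂ) ^ n‖ = 1 := by rw [norm_pow, norm_neg, norm_one, one_pow]
  rw [h1, one_mul]
  exact norm_pow_T_le q hq (le_trans (T_ge n) (by omega))

lemma hG (hq : ‖q‖ < 1) : Filter.Tendsto (G q) Filter.atTop (nhds 0) := by
  refine squeeze_zero_norm ?_ ((hmaj q hq).tendsto_atTop_zero)
  intro n
  rw [G, norm_mul, norm_mul]
  have h1 : ‖(-1 : ℂ) ^ n‖ = 1 := by rw [norm_pow, norm_neg, norm_one, one_pow]
  rw [h1, one_mul]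
  have h2 := norm_pow_T_le q hq (T_ge n)
  have h3 := norm_tl_le q hq (n - 1)
  have hb : (0:ℝ) ≤ ‖q‖ ^ n := pow_nonneg (norm_nonneg q) n
  have hD : (0:ℝ) ≤ D q ^ 3 := pow_nonneg (Real.exp_nonneg _) 3
  have h4 : (((n - 1 : ℕ) : ℝ) + 1) ^ 2 * D q ^ 3 ≤ ((n : ℝ) + 1) ^ 2 * D q ^ 3 := by
    have hc : ((n - 1 : ℕ) : ℝ) ≤ (n : ℝ) := Nat.cast_le.2 (by omega)
    have hc0 : (0:ℝ) ≤ ((n - 1 : ℕ) : ℝ) := Nat.cast_nonneg _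
    have h5 : (((n - 1 : ℕ) : ℝ) + 1) ^ 2 ≤ ((n : ℝ) + 1) ^ 2 := by nlinarith
    exact mul_le_mul_of_nonneg_right h5 hD
  calc ‖q ^ (n * (n + 1) / 2)‖ * ‖tl q (n - 1) 0‖
      ≤ ‖q‖ ^ n * ((((n - 1 : ℕ) : ℝ) + 1) ^ 2 * D q ^ 3) := by
        apply mul_le_mul h2 _ (norm_nonneg _) hb
        calc ‖tl q (n - 1) 0‖ ≤ ((n - 1 : ℕ) + 1 : ℝ) ^ 2 * D q ^ 3 := by
              have := h3
              push_cast at this ⊢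
              nlinarith [this]
          _ = (((n - 1 : ℕ) : ℝ) + 1) ^ 2 * D q ^ 3 := by push_cast; ring
    _ ≤ ((n : ℝ) + 1) ^ 2 * ‖q‖ ^ n * D q ^ 3 := by
        have := mul_le_mul_of_nonneg_left h4 hb
        nlinarith [this]

lemma R_even (m : ℕ) : R q (2 * m) = q ^ (3 * m ^ 2 + 2 * m) := by
  rw [R]
  have h1 : (-1 : ℂ) ^ (2 * m) = 1 := by rw [pow_mul]; norm_num
  rw [h1, one_mul]
  congr 1
  have h2 : 2 * m * (2 * m + 1) = m * (2 * m + 1) * 2 := by ring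
  have h3 : 2 * m / 2 = m := by omega
  rw [h3, h2, Nat.mul_div_cancel _ (by norm_num : 0 < 2)]
  ring

lemma R_odd (m : ℕ) : R q (2 * m + 1) = -q ^ (3 * m ^ 2 + 4 * m + 1) := by
  rw [R]
  have h1 : (-1 : ℂ) ^ (2 * m + 1) = -1 := by rw [pow_succ, pow_mul]; norm_num
  rw [h1, neg_one_mul, neg_inj]
  congr 1
  have h2 : (2 * m + 1) * (2 * m + 1 + 1) = (2 * m + 1) * (m + 1) * 2 := by ring
  have h3 : (2 * m + 1) / 2 = m := by omega
  rw [h3, h2, Nat.mul_div_cancel _ (by norm_num : 0 < 2)]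
  ring

lemma tsum_R (hq : ‖q‖ < 1) :
    ∑' n, R q n = ∑' n : ℕ, q ^ (3 * n ^ 2 + 2 * n) * (1 - q ^ (2 * n + 1)) := by
  have hinj1 : Function.Injective (fun k : ℕ => 2 * k) := fun a b h => by
    have h' : 2 * a = 2 * b := h
    omega
  have hinj2 : Function.Injective (fun k : ℕ => 2 * k + 1) := fun a b h => by
    have h' : 2 * a + 1 = 2 * b + 1 := h
    omega
  have he : Summable (fun k : ℕ => R q (2 * k)) := by
    have := (hR q hq).comp_injective hinj1
    exact this
  have ho : Summable (fun k : ℕ => R q (2 * k + 1)) := by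
    have := (hR q hq).comp_injective hinj2
    exact this
  rw [← tsum_even_add_odd he ho]
  have he' : Summable (fun m : ℕ => q ^ (3 * m ^ 2 + 2 * m)) := by
    apply he.congr; intro m; rw [R_even]
  have ho' : Summable (fun m : ℕ => q ^ (3 * m ^ 2 + 4 * m + 1)) := by
    apply (ho.neg).congr; intro m; rw [R_odd, neg_neg]
  rw [tsum_congr (fun m => R_even q m), tsum_congr (fun m => R_odd q m)]
  rw [tsum_neg, ← sub_eq_add_neg, ← Summable.tsum_sub he' ho']
  apply tsum_congr
  intro m
  rw [mul_sub, mul_one, ← pow_add]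
  congr 2
  ring

lemma main (hq : ‖q‖ < 1) :
    ∑' n, A q n = ∑' n : ℕ, q ^ (3 * n ^ 2 + 2 * n) * (1 - q ^ (2 * n + 1)) := by
  have t1 : Filter.Tendsto (fun N => ∑ n ∈ Finset.range N, A q n)
      Filter.atTop (nhds (∑' n, A q n)) := (hA q hq).hasSum.tendsto_sum_nat
  have t2 : Filter.Tendsto (fun N => (∑ n ∈ Finset.range N, R q n) - G q N)
      Filter.atTop (nhds (∑' n, R q n - 0)) :=
    ((hR q hq).hasSum.tendsto_sum_nat).sub (hG q hq)
  have t3 : Filter.Tendsto (fun N => ∑ n ∈ Finset.range N, A q n)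
      Filter.atTop (nhds (∑' n, R q n - 0)) := by
    apply t2.congr
    intro N
    rw [partial_sum q hq N]
  have := tendsto_nhds_unique t1 t3
  rw [this, sub_zero, tsum_R q hq]


lemma inner_eq (n : ℕ) :
    (∑' k : ℕ, (if k ≤ n then
        (-1 : ℂ) ^ n * q ^ (k * (k + 1) + n * (n + 1) / 2) * qp q n /
          (qp q k * qp q (n - k))
      else 0)) = A q n := by
  rw [tsum_eq_sum (s := Finset.range (n + 1))
    (fun k hk => if_neg (by rw [Finset.mem_range] at hk; omega))]
  rw [A, a, Finset.mul_sum]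
  apply Finset.sum_congr rfl
  intro k hk
  rw [Finset.mem_range] at hk
  rw [if_pos (by omega : k ≤ n), B]
  have he : k * (k + 1) + n * (n + 1) / 2 = n * (n + 1) / 2 + (k * k + 1 * k) := by
    obtain ⟨u, hu⟩ : ∃ u, n * (n + 1) / 2 = u := ⟨_, rfl⟩
    rw [hu]
    ring
  rw [he, pow_add]
  ring


end BB3

/-- A Bailey-pair identity. -/
theorem bailey_b3 (q : ℂ) (hq : ‖q‖ < 1) :
    ∑' n : ℕ, ∑' k : ℕ,
      (if k ≤ n then
        (-1 : ℂ) ^ n * q ^ (k * (k + 1) + n * (n + 1) / 2) * qp q n /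
          (qp q k * qp q (n - k))
      else 0) =
    ∑' n : ℕ, q ^ (3 * n ^ 2 + 2 * n) * (1 - q ^ (2 * n + 1)) := by
  rw [tsum_congr (BB3.inner_eq q)]
  exact BB3.main q hq
end

section
/- Identity for the trefoil mirror -3_1: the triple sum over a, b, c ≥ 0 of q^(a + b² + c² + ab + ac)/((q;q)_a (q;q)_b (q;q)_c (q;q)_{a+b} (q;q)_{a+c}) equals 1/(q;q)_∞³, as formal power series in q. -/
open scoped BigOperators

open Filter Finset

namespace Phi

lemma one_sub_ne {w : ℂ} (hw : ‖w‖ < 1) : 1 - w ≠ 0 := by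
  intro h
  have : (1:ℂ) = w := by linear_combination h
  rw [← this] at hw; simp at hw

variable {q : ℂ}

lemma qp_eq_qpa (n : ℕ) : qp q n = qpa q q n := by
  unfold qp qpa
  exact Finset.prod_congr rfl fun k _ => by rw [pow_succ']

lemma qpInf_eq_qpaInf : qpInf q = qpaInf q q := by
  unfold qpInf qpaInf
  exact tprod_congr fun k => by rw [pow_succ']

lemma qp_ne (hq : ‖q‖ < 1) (n : ℕ) : qp q n ≠ 0 := by
  unfold qp
  refine Finset.prod_ne_zero_iff.2 fun k _ => one_sub_ne ?_
  rw [norm_pow]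
  exact pow_lt_one₀ (norm_nonneg q) hq (by omega)

lemma norm_pow_succ_lt (hq : ‖q‖ < 1) (k : ℕ) : ‖q‖ ^ (k+1) < 1 :=
  pow_lt_one₀ (norm_nonneg q) hq (by omega)

lemma qpa_ne (hq : ‖q‖ < 1) {a : ℂ} (ha : ∀ k, ‖a * q ^ k‖ ≤ ‖q‖ ^ (k+1)) (n : ℕ) :
    qpa a q n ≠ 0 := by
  unfold qpa
  exact Finset.prod_ne_zero_iff.2 fun k _ =>
    one_sub_ne (lt_of_le_of_lt (ha k) (norm_pow_succ_lt hq k))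

/-- Weierstrass-type inequality -/
lemma prod_one_sub_ge (x : ℕ → ℝ) (hx : ∀ k, 0 ≤ x k ∧ x k ≤ 1) (s : Finset ℕ) :
    1 - ∑ k ∈ s, x k ≤ ∏ k ∈ s, (1 - x k) := by
  classical
  induction s using Finset.induction with
  | empty => simp
  | @insert n s hns ih =>
    rw [Finset.prod_insert hns, Finset.sum_insert hns]
    have h1 : 0 ≤ 1 - x n := by linarith [(hx n).2]
    have h2 : 0 ≤ ∑ k ∈ s, x k := Finset.sum_nonneg fun k _ => (hx k).1
    nlinarith [(hx n).1, ih]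

lemma exists_lb (hq : ‖q‖ < 1) : ∃ c : ℝ, 0 < c ∧
    ∀ (n : ℕ) (w : ℕ → ℂ), (∀ k, ‖w k‖ ≤ ‖q‖ ^ (k+1)) → c ≤ ‖∏ k ∈ range n, (1 - w k)‖ := by
  set x : ℕ → ℝ := fun k => ‖q‖ ^ (k+1) with hxdef
  have hx01 : ∀ k, 0 ≤ x k ∧ x k ≤ 1 := fun k =>
    ⟨pow_nonneg (norm_nonneg q) _, (norm_pow_succ_lt hq k).le⟩
  have hxsum : Summable x := by
    simpa [hxdef, pow_succ'] using (summable_geometric_of_lt_one (norm_nonneg q) hq).mul_left ‖q‖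
  have htail : Tendsto (fun i => ∑' k, x (k + i)) atTop (nhds 0) := tendsto_sum_nat_add x
  obtain ⟨K, hK⟩ : ∃ K, ∑' k, x (k + K) < 1/2 := by
    have := (htail.eventually (eventually_lt_nhds (by norm_num : (0:ℝ) < 1/2))).exists
    exact this
  have hposK : 0 < ∏ k ∈ range K, (1 - x k) := by
    apply Finset.prod_pos
    intro k _
    have := norm_pow_succ_lt hq k
    simp only [hxdef]; linarith
  refine ⟨(∏ k ∈ range K, (1 - x k)) * (1/2), by positivity, ?_⟩
  intro n w hw
  have step1 : ∏ k ∈ range n, (1 - x k) ≤ ‖∏ k ∈ range n, (1 - w k)‖ := by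
    rw [norm_prod]
    apply Finset.prod_le_prod
    · intro k _; linarith [(hx01 k).2]
    · intro k _
      calc 1 - x k ≤ 1 - ‖w k‖ := by have := hw k; simp only [hxdef]; linarith
        _ ≤ ‖(1:ℂ) - w k‖ := by
            have := norm_sub_norm_le (1:ℂ) (w k)
            simpa using this
  refine le_trans ?_ step1
  rcases le_or_gt n K with hn | hn
  · have : ∏ k ∈ range K, (1 - x k) ≤ ∏ k ∈ range n, (1 - x k) := by
      rw [← Finset.prod_range_mul_prod_Ico _ hn]
      have h2 : ∏ k ∈ Finset.Ico n K, (1 - x k) ≤ 1 := by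
        apply Finset.prod_le_one
        · intro k _; linarith [(hx01 k).2]
        · intro k _; linarith [(hx01 k).1]
      nlinarith [Finset.prod_nonneg (fun k (_ : k ∈ range n) => by linarith [(hx01 k).2] : ∀ k ∈ range n, (0:ℝ) ≤ 1 - x k), hposK]
    nlinarith [hposK]
  · rw [← Finset.prod_range_mul_prod_Ico _ hn.le]
    have h3 : 1/2 ≤ ∏ k ∈ Finset.Ico K n, (1 - x k) := by
      have h4 : ∑ k ∈ Finset.Ico K n, x k ≤ ∑' k, x (k + K) := by
        rw [Finset.sum_Ico_eq_sum_range]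
        have hsK : Summable (fun k => x (k + K)) := (summable_nat_add_iff K).2 hxsum
        calc ∑ k ∈ range (n-K), x (K + k) = ∑ k ∈ range (n-K), x (k + K) :=
              Finset.sum_congr rfl (fun k _ => by rw [add_comm])
          _ ≤ ∑' k, x (k + K) := Summable.sum_le_tsum _ (fun k _ => (hx01 _).1) hsK
      have := prod_one_sub_ge x hx01 (Finset.Ico K n)
      linarith
    nlinarith [hposK]

end Phi

namespace Phi

variable {q : ℂ}

lemma qp_succ (n : ℕ) : qp q (n+1) = qp q n * (1 - q ^ (n+1)) := Finset.prod_range_succ _ _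

lemma one_sub_qpow_ne (hq : ‖q‖ < 1) (n : ℕ) : (1:ℂ) - q ^ (n+1) ≠ 0 :=
  one_sub_ne (by rw [norm_pow]; exact norm_pow_succ_lt hq n)

lemma qp_lb (hq : ‖q‖ < 1) {c : ℝ}
    (hcb : ∀ (n : ℕ) (w : ℕ → ℂ), (∀ k, ‖w k‖ ≤ ‖q‖ ^ (k+1)) → c ≤ ‖∏ k ∈ range n, (1 - w k)‖)
    (n : ℕ) : c ≤ ‖qp q n‖ := by
  unfold qp
  exact hcb n (fun k => q ^ (k+1)) (fun k => by rw [norm_pow])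

lemma qpa_lb (hq : ‖q‖ < 1) {c : ℝ}
    (hcb : ∀ (n : ℕ) (w : ℕ → ℂ), (∀ k, ‖w k‖ ≤ ‖q‖ ^ (k+1)) → c ≤ ‖∏ k ∈ range n, (1 - w k)‖)
    {a : ℂ} (ha : ∀ k, ‖a * q ^ k‖ ≤ ‖q‖ ^ (k+1)) (n : ℕ) : c ≤ ‖qpa a q n‖ := by
  unfold qpa
  exact hcb n (fun k => a * q ^ k) ha

lemma ha_mul_q (hq : ‖q‖ < 1) {z : ℂ} (hz : ‖z‖ ≤ 1) (k : ℕ) : ‖z * q * q ^ k‖ ≤ ‖q‖ ^ (k+1) := by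
  rw [norm_mul, norm_mul, norm_pow, pow_succ']
  calc ‖z‖ * ‖q‖ * ‖q‖^k ≤ 1 * ‖q‖ * ‖q‖^k := by gcongr
    _ = ‖q‖ * ‖q‖^k := by ring

lemma ha_q (k : ℕ) : ‖q * q ^ k‖ ≤ ‖q‖ ^ (k+1) := by
  rw [norm_mul, norm_pow, pow_succ']

lemma tendsto_qpa (hq : ‖q‖ < 1) {a : ℂ} (ha : ∀ k, ‖a * q ^ k‖ ≤ ‖q‖ ^ (k+1)) :
    Tendsto (fun N => qpa a q N) atTop (nhds (qpaInf a q)) := by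
  have hne : ∀ k, (1 : ℂ) - a * q ^ k ≠ 0 := fun k =>
    one_sub_ne (lt_of_le_of_lt (ha k) (norm_pow_succ_lt hq k))
  have hlog : Summable fun k => Complex.log (1 - a * q ^ k) := by
    apply Summable.of_norm_bounded_eventually_nat (g := fun k => 3/2 * ‖q‖ ^ (k+1))
      (((summable_geometric_of_lt_one (norm_nonneg q) hq).mul_left ‖q‖).mul_left (3/2) |>.congr
        (fun k => by rw [pow_succ']))
    have hsmall : ∀ᶠ k in atTop, ‖q‖ ^ (k+1) ≤ 1/2 := by
      have h0 : Tendsto (fun k : ℕ => ‖q‖ ^ (k+1)) atTop (nhds 0) := by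
        have := tendsto_pow_atTop_nhds_zero_of_lt_one (norm_nonneg q) hq
        exact this.comp (tendsto_add_atTop_nat 1)
      exact h0.eventually (eventually_le_nhds (by norm_num))
    filter_upwards [hsmall] with k hk
    have h1 : ‖-(a * q ^ k)‖ ≤ 1/2 := by rw [norm_neg]; exact le_trans (ha k) hk
    have := Complex.norm_log_one_add_half_le_self h1
    rw [show (1:ℂ) + -(a * q^k) = 1 - a*q^k by ring] at this
    calc ‖Complex.log (1 - a * q ^ k)‖ ≤ 3/2 * ‖-(a * q^k)‖ := this
      _ ≤ 3/2 * ‖q‖^(k+1) := by rw [norm_neg]; nlinarith [ha k, norm_nonneg (a * q^k)]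
  have hm : Multipliable (fun k => 1 - a * q ^ k) :=
    Complex.multipliable_of_summable_log hlog
  have := hm.hasProd.tendsto_prod_nat
  unfold qpa qpaInf
  exact this

end Phi

noncomputable def eulf (q z : ℂ) : ℂ := ∑' n : ℕ, z ^ n / qp q n

namespace Phi

variable {q : ℂ}

lemma summable_div_lb {f : ℕ → ℂ} {g : ℕ → ℂ} {c : ℝ} (hc : 0 < c)
    (hg : ∀ n, c ≤ ‖g n‖) {r : ℝ} (hr0 : 0 ≤ r) (hr : r < 1)
    (hf : ∀ n, ‖f n‖ ≤ r ^ n) : Summable (fun n => f n / g n) := by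
  apply Summable.of_norm_bounded (g := fun n => r ^ n / c)
    ((summable_geometric_of_lt_one hr0 hr).div_const c)
  intro n
  rw [norm_div]
  gcongr
  · exact hf n
  · exact hg n

lemma summable_eulf (hq : ‖q‖ < 1) {z : ℂ} (hz : ‖z‖ < 1) :
    Summable (fun n : ℕ => z ^ n / qp q n) := by
  obtain ⟨c, hc0, hcb⟩ := exists_lb hq
  exact summable_div_lb hc0 (qp_lb hq hcb) (norm_nonneg z) hz
    (fun n => by rw [norm_pow])

lemma norm_q_mul_lt (hq : ‖q‖ < 1) {z : ℂ} (hz : ‖z‖ < 1) : ‖q * z‖ < 1 := by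
  rw [norm_mul]
  nlinarith [norm_nonneg q, norm_nonneg z]

lemma eulf_fe (hq : ‖q‖ < 1) {z : ℂ} (hz : ‖z‖ < 1) :
    (1 - z) * eulf q z = eulf q (q * z) := by
  have h1 : Summable (fun n : ℕ => z ^ n / qp q n) := summable_eulf hq hz
  have h2 : Summable (fun n : ℕ => (q * z) ^ n / qp q n) :=
    summable_eulf hq (norm_q_mul_lt hq hz)
  have key : eulf q z - eulf q (q * z) = z * eulf q z := by
    unfold eulf
    rw [← Summable.tsum_sub h1 h2, Summable.tsum_eq_zero_add (h1.sub h2)]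
    have hterm : ∀ n : ℕ,
        z ^ (n+1) / qp q (n+1) - (q * z) ^ (n+1) / qp q (n+1) = z * (z ^ n / qp q n) := by
      intro n
      rw [qp_succ]
      have hn1 := qp_ne hq n
      have hn2 := one_sub_qpow_ne hq n
      field_simp
      ring
    calc (z ^ 0 / qp q 0 - (q*z) ^ 0 / qp q 0) +
          ∑' n : ℕ, (z ^ (n+1) / qp q (n+1) - (q * z) ^ (n+1) / qp q (n+1))
        = ∑' n : ℕ, z * (z ^ n / qp q n) := by
          rw [tsum_congr hterm]
          simp [qp]
      _ = z * ∑' n : ℕ, z ^ n / qp q n := tsum_mul_left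
  linear_combination key

lemma eulf_iter (hq : ‖q‖ < 1) {z : ℂ} (hz : ‖z‖ < 1) (N : ℕ) :
    eulf q z * qpa z q N = eulf q (q ^ N * z) := by
  induction N with
  | zero => simp [qpa]
  | succ N ih =>
    have hzN : ‖q ^ N * z‖ < 1 := by
      rw [norm_mul, norm_pow]
      nlinarith [norm_nonneg z, pow_nonneg (norm_nonneg q) N,
        pow_le_one₀ (norm_nonneg q) hq.le (n := N)]
    have := eulf_fe hq hzN
    unfold qpa
    rw [Finset.prod_range_succ, ← mul_assoc]
    unfold qpa at ih
    rw [ih]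
    calc eulf q (q ^ N * z) * (1 - z * q ^ N)
        = (1 - q ^ N * z) * eulf q (q ^ N * z) := by ring
      _ = eulf q (q * (q ^ N * z)) := this
      _ = eulf q (q ^ (N+1) * z) := by ring_nf

lemma eulf_near_one (hq : ‖q‖ < 1) {c : ℝ} (hc0 : 0 < c)
    (hcb : ∀ (n : ℕ) (w : ℕ → ℂ), (∀ k, ‖w k‖ ≤ ‖q‖ ^ (k+1)) → c ≤ ‖∏ k ∈ range n, (1 - w k)‖)
    {w : ℂ} (hw : ‖w‖ ≤ 1/2) : ‖eulf q w - 1‖ ≤ 2 / c * ‖w‖ := by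
  have hw1 : ‖w‖ < 1 := lt_of_le_of_lt hw (by norm_num)
  have h1 : Summable (fun n : ℕ => w ^ n / qp q n) := summable_eulf hq hw1
  have heq : eulf q w - 1 = ∑' n : ℕ, w ^ (n+1) / qp q (n+1) := by
    unfold eulf
    rw [Summable.tsum_eq_zero_add h1]
    simp [qp]
  rw [heq]
  have hgs : HasSum (fun n : ℕ => ‖w‖ / c * (1/2) ^ n) (‖w‖ / c * (1 - 1/2)⁻¹) :=
    (hasSum_geometric_of_lt_one (by norm_num) (by norm_num)).mul_left _
  have hb := tsum_of_norm_bounded hgs (f := fun n : ℕ => w ^ (n+1) / qp q (n+1)) ?_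
  · calc ‖∑' n : ℕ, w ^ (n+1) / qp q (n+1)‖ ≤ ‖w‖ / c * (1 - 1/2)⁻¹ := hb
      _ = 2 / c * ‖w‖ := by ring
  · intro n
    rw [norm_div, norm_pow]
    calc ‖w‖ ^ (n+1) / ‖qp q (n+1)‖ ≤ ‖w‖ ^ (n+1) / c := by
          gcongr
          exact qp_lb hq hcb (n+1)
      _ = ‖w‖ * ‖w‖ ^ n / c := by ring
      _ ≤ ‖w‖ * (1/2) ^ n / c := by
          gcongr
      _ = ‖w‖ / c * (1/2) ^ n := by ring

lemma eulf_tendsto (hq : ‖q‖ < 1) (z : ℂ) :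
    Tendsto (fun N : ℕ => eulf q (q ^ N * z)) atTop (nhds 1) := by
  obtain ⟨c, hc0, hcb⟩ := exists_lb hq
  have h0 : Tendsto (fun N : ℕ => q ^ N * z) atTop (nhds 0) := by
    have := (tendsto_pow_atTop_nhds_zero_of_norm_lt_one hq).mul_const z
    simpa using this
  have hev : ∀ᶠ N : ℕ in atTop, ‖q ^ N * z‖ ≤ 1/2 := by
    have := h0.norm
    simp only [norm_zero] at this
    exact this.eventually (eventually_le_nhds (by norm_num))
  have hsq : Tendsto (fun N : ℕ => eulf q (q ^ N * z) - 1) atTop (nhds 0) := by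
    have hgt : Tendsto (fun N : ℕ => 2 / c * ‖q ^ N * z‖) atTop (nhds 0) := by
      have := h0.norm
      simp only [norm_zero] at this
      simpa using this.const_mul (2 / c)
    apply squeeze_zero_norm' _ hgt
    filter_upwards [hev] with N hN
    exact eulf_near_one hq hc0 hcb hN
  have := hsq.add_const 1
  simpa using this

lemma euler_q (hq : ‖q‖ < 1) : (∑' n : ℕ, q ^ n / qp q n) = 1 / qpInf q := by
  have hiter : ∀ N, eulf q q * qpa q q N = eulf q (q ^ N * q) :=
    fun N => eulf_iter hq hq N
  have h1 : Tendsto (fun N => eulf q q * qpa q q N) atTop (nhds (eulf q q * qpaInf q q)) :=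
    (tendsto_qpa hq (fun k => ha_q k)).const_mul _
  have h2 : Tendsto (fun N => eulf q (q ^ N * q)) atTop (nhds 1) := eulf_tendsto hq q
  have h3 : eulf q q * qpaInf q q = 1 := by
    apply tendsto_nhds_unique _ h2
    exact (funext hiter : (fun N => eulf q q * qpa q q N) = _) ▸ h1
  rw [← qpInf_eq_qpaInf] at h3
  have : eulf q q = 1 / qpInf q := eq_one_div_of_mul_eq_one_left (by linear_combination h3)
  exact this

end Phi

noncomputable def duf (q z : ℂ) : ℂ :=
  ∑' b : ℕ, q ^ (b^2) * z ^ b / (qp q b * qpa (z*q) q b)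

noncomputable def dud (q z : ℂ) : ℂ :=
  ∑' b : ℕ, q ^ (b^2) * z ^ b * ((1 - q^b) - z * q^(b+1)) / (qp q b * qpa (z*q^2) q b)

namespace Phi

variable {q : ℂ}

lemma summable_div_lb' {f g : ℕ → ℂ} {c C r : ℝ} (hc : 0 < c) (hC : 0 ≤ C)
    (hg : ∀ n, c ≤ ‖g n‖) (hr0 : 0 ≤ r) (hr : r < 1)
    (hf : ∀ n, ‖f n‖ ≤ C * r ^ n) : Summable (fun n => f n / g n) := by
  apply Summable.of_norm_bounded (g := fun n => C * r ^ n / c)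
    (((summable_geometric_of_lt_one hr0 hr).mul_left C).div_const c)
  intro n
  rw [norm_div]
  gcongr
  · exact hf n
  · exact hg n

lemma ha_mul_q2 (hq : ‖q‖ < 1) {z : ℂ} (hz : ‖z‖ ≤ 1) (k : ℕ) :
    ‖z * q^2 * q ^ k‖ ≤ ‖q‖ ^ (k+1) := by
  rw [norm_mul, norm_mul, norm_pow, norm_pow]
  have h1 : ‖q‖^2 * ‖q‖^k = ‖q‖^(k+1) * ‖q‖ := by ring
  calc ‖z‖ * ‖q‖^2 * ‖q‖^k ≤ 1 * ‖q‖^2 * ‖q‖^k := by gcongr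
    _ = ‖q‖^(k+1) * ‖q‖ := by rw [← h1]; ring
    _ ≤ ‖q‖^(k+1) * 1 := by gcongr
    _ = ‖q‖^(k+1) := by ring

lemma norm_qsq_le (hq : ‖q‖ < 1) {z : ℂ} (hz : ‖z‖ ≤ 1) (b : ℕ) :
    ‖q ^ (b^2) * z ^ b‖ ≤ ‖q‖ ^ b := by
  rw [norm_mul, norm_pow, norm_pow]
  calc ‖q‖^(b^2) * ‖z‖^b ≤ ‖q‖^(b^2) * 1 := by
        gcongr
        exact pow_le_one₀ (norm_nonneg z) hz
    _ = ‖q‖^(b^2) := by ring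
    _ ≤ ‖q‖^b := pow_le_pow_of_le_one (norm_nonneg q) hq.le (Nat.le_self_pow (by norm_num) b)

lemma bracket_le (hq : ‖q‖ < 1) {z : ℂ} (hz : ‖z‖ ≤ 1) (b j : ℕ) :
    ‖(1 - q^b) - z * q^(b+j)‖ ≤ 3 := by
  have h1 : ‖q‖^b ≤ 1 := pow_le_one₀ (norm_nonneg q) hq.le
  have h2 : ‖z * q^(b+j)‖ ≤ 1 := by
    rw [norm_mul, norm_pow]
    have := pow_le_one₀ (norm_nonneg q) hq.le (n := b+j)
    nlinarith [norm_nonneg z, pow_nonneg (norm_nonneg q) (b+j)]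
  calc ‖(1 - q^b) - z * q^(b+j)‖ ≤ ‖(1:ℂ) - q^b‖ + ‖z * q^(b+j)‖ := norm_sub_le _ _
    _ ≤ (‖(1:ℂ)‖ + ‖q^b‖) + 1 := by gcongr; exact norm_sub_le _ _
    _ ≤ (1 + 1) + 1 := by
        rw [norm_one, norm_pow]
        gcongr
    _ = 3 := by norm_num

lemma qpa_succ (a q : ℂ) (n : ℕ) : qpa a q (n+1) = qpa a q n * (1 - a * q^n) :=
  Finset.prod_range_succ _ _

lemma qpa_succ' (a q : ℂ) (n : ℕ) : qpa a q (n+1) = qpa (a*q) q n * (1 - a) := by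
  unfold qpa
  rw [Finset.prod_range_succ']
  congr 1
  · exact Finset.prod_congr rfl fun k _ => by rw [pow_succ']; ring_nf
  · simp

end Phi

namespace Phi

variable {q : ℂ}

lemma denom_lb (hq : ‖q‖ < 1) {c : ℝ} (hc0 : 0 < c)
    (hcb : ∀ (n : ℕ) (w : ℕ → ℂ), (∀ k, ‖w k‖ ≤ ‖q‖ ^ (k+1)) → c ≤ ‖∏ k ∈ range n, (1 - w k)‖)
    {a : ℂ} (ha : ∀ k, ‖a * q ^ k‖ ≤ ‖q‖ ^ (k+1)) (m n : ℕ) :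
    c * c ≤ ‖qp q m * qpa a q n‖ := by
  rw [norm_mul]
  exact mul_le_mul (qp_lb hq hcb m) (qpa_lb hq hcb ha n) hc0.le (norm_nonneg _)

lemma hrel (hq : ‖q‖ < 1) (z : ℂ) (b : ℕ) :
    (1 - z*q) * qpa (z*q^2) q b = qpa (z*q) q b * (1 - z*q^(b+1)) := by
  have h1 := qpa_succ' (z*q) q b
  have h2 := qpa_succ (z*q) q b
  rw [show (z*q)*q = z*q^2 by ring] at h1
  rw [show (z*q)*q^b = z*q^(b+1) by ring] at h2
  rw [h1] at h2
  linear_combination h2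

lemma norm_q_mul_le_one (hq : ‖q‖ < 1) {z : ℂ} (hz : ‖z‖ ≤ 1) : ‖q * z‖ ≤ 1 := by
  rw [norm_mul]
  nlinarith [norm_nonneg q, norm_nonneg z]

lemma summable_duf (hq : ‖q‖ < 1) {z : ℂ} (hz : ‖z‖ ≤ 1) :
    Summable (fun b : ℕ => q ^ (b^2) * z ^ b / (qp q b * qpa (z*q) q b)) := by
  obtain ⟨c, hc0, hcb⟩ := exists_lb hq
  exact summable_div_lb' (mul_pos hc0 hc0) zero_le_one
    (denom_lb hq hc0 hcb (ha_mul_q hq hz) _ ·)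
    (norm_nonneg q) hq (fun b => by simpa using norm_qsq_le hq hz b)

lemma dud_eq (hq : ‖q‖ < 1) {z : ℂ} (hz : ‖z‖ ≤ 1) :
    dud q z = (1 - z*q) * duf q z - duf q (q*z) := by
  obtain ⟨c, hc0, hcb⟩ := exists_lb hq
  have hP := qp_ne hq
  have hA : ∀ b, qpa (z*q) q b ≠ 0 := qpa_ne hq (ha_mul_q hq hz)
  have hB : ∀ b, qpa (z*q^2) q b ≠ 0 := qpa_ne hq (ha_mul_q2 hq hz)
  have hqz : ‖q * z‖ ≤ 1 := norm_q_mul_le_one hq hz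
  have hterm1 : ∀ b : ℕ, (1 - z*q) * (q^(b^2) * z^b / (qp q b * qpa (z*q) q b))
      = q^(b^2) * z^b * (1 - z*q^(b+1)) / (qp q b * qpa (z*q^2) q b) := by
    intro b
    rw [mul_div_assoc',
      div_eq_div_iff (mul_ne_zero (hP b) (hA b)) (mul_ne_zero (hP b) (hB b))]
    linear_combination q^(b^2) * z^b * qp q b * hrel hq z b
  have hS1 : Summable (fun b : ℕ =>
      q^(b^2) * z^b * (1 - z*q^(b+1)) / (qp q b * qpa (z*q^2) q b)) := by
    apply summable_div_lb' (mul_pos hc0 hc0) (by norm_num : (0:ℝ) ≤ 2)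
      (denom_lb hq hc0 hcb (ha_mul_q2 hq hz) _ ·) (norm_nonneg q) hq
    intro b
    rw [norm_mul]
    have h1 := norm_qsq_le hq hz b
    have h2 : ‖(1:ℂ) - z*q^(b+1)‖ ≤ 2 := by
      calc ‖(1:ℂ) - z*q^(b+1)‖ ≤ ‖(1:ℂ)‖ + ‖z*q^(b+1)‖ := norm_sub_le _ _
        _ ≤ 1 + 1 := by
            rw [norm_one, norm_mul, norm_pow]
            have := pow_le_one₀ (norm_nonneg q) hq.le (n := b+1)
            nlinarith [norm_nonneg z, pow_nonneg (norm_nonneg q) (b+1)]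
        _ = 2 := by norm_num
    nlinarith [norm_nonneg (q^(b^2) * z^b), norm_nonneg ((1:ℂ) - z*q^(b+1)),
      pow_nonneg (norm_nonneg q) b]
  have hS2 : Summable (fun b : ℕ =>
      q^(b^2) * (q*z)^b / (qp q b * qpa (z*q^2) q b)) := by
    apply summable_div_lb' (mul_pos hc0 hc0) zero_le_one
      (denom_lb hq hc0 hcb (ha_mul_q2 hq hz) _ ·) (norm_nonneg q) hq
    intro b
    simpa using norm_qsq_le hq hqz b
  have e1 : (1 - z*q) * duf q z
      = ∑' b : ℕ, q^(b^2) * z^b * (1 - z*q^(b+1)) / (qp q b * qpa (z*q^2) q b) := by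
    unfold duf
    rw [← tsum_mul_left]
    exact tsum_congr hterm1
  have e2 : duf q (q*z)
      = ∑' b : ℕ, q^(b^2) * (q*z)^b / (qp q b * qpa (z*q^2) q b) := by
    unfold duf
    apply tsum_congr
    intro b
    rw [show (q*z)*q = z*q^2 by ring]
  rw [e1, e2]
  unfold dud
  rw [← Summable.tsum_sub hS1 hS2]
  apply tsum_congr
  intro b
  rw [div_sub_div_same]
  congr 1
  ring

end Phi

namespace Phi

variable {q : ℂ}

lemma one_sub_z_pow_ne (hq : ‖q‖ < 1) {z : ℂ} (hz : ‖z‖ ≤ 1) (m : ℕ) :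
    (1:ℂ) - z * q^(m+1) ≠ 0 := by
  apply one_sub_ne
  rw [norm_mul, norm_pow]
  have h1 : ‖q‖^(m+1) ≤ ‖q‖^1 := pow_le_pow_of_le_one (norm_nonneg q) hq.le (by omega)
  rw [pow_one] at h1
  nlinarith [pow_nonneg (norm_nonneg q) (m+1), norm_nonneg z]

lemma dud_rec (hq : ‖q‖ < 1) {z : ℂ} (hz : ‖z‖ ≤ 1) :
    dud q z = (-(q*z)/(1 - z*q^2)) * dud q (q*z) := by
  obtain ⟨c, hc0, hcb⟩ := exists_lb hq
  have hP := qp_ne hq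
  have hB : ∀ b, qpa (z*q^2) q b ≠ 0 := qpa_ne hq (ha_mul_q2 hq hz)
  have hqz1 : ‖q*z‖ ≤ 1 := norm_q_mul_le_one hq hz
  have hC : ∀ b, qpa ((q*z)*q^2) q b ≠ 0 := qpa_ne hq (ha_mul_q2 hq hqz1)
  have hq2ne : (1:ℂ) - z*q^2 ≠ 0 := by
    have := one_sub_z_pow_ne hq hz 1
    simpa using this
  -- summability of the three pieces
  have hSU : Summable (fun b : ℕ =>
      q^(b^2) * z^b * (1 - q^b) / (qp q b * qpa (z*q^2) q b)) := by
    apply summable_div_lb' (mul_pos hc0 hc0) (by norm_num : (0:ℝ) ≤ 2)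
      (denom_lb hq hc0 hcb (ha_mul_q2 hq hz) _ ·) (norm_nonneg q) hq
    intro b
    rw [norm_mul]
    have h1 := norm_qsq_le hq hz b
    have h2 : ‖(1:ℂ) - q^b‖ ≤ 2 := by
      calc ‖(1:ℂ) - q^b‖ ≤ ‖(1:ℂ)‖ + ‖q^b‖ := norm_sub_le _ _
        _ ≤ 1 + 1 := by
            rw [norm_one, norm_pow]
            have := pow_le_one₀ (norm_nonneg q) hq.le (n := b)
            linarith
        _ = 2 := by norm_num
    nlinarith [norm_nonneg (q^(b^2) * z^b), norm_nonneg ((1:ℂ) - q^b),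
      pow_nonneg (norm_nonneg q) b]
  have hSV : Summable (fun b : ℕ =>
      q^(b^2) * z^b * (z * q^(b+1)) / (qp q b * qpa (z*q^2) q b)) := by
    apply summable_div_lb' (mul_pos hc0 hc0) zero_le_one
      (denom_lb hq hc0 hcb (ha_mul_q2 hq hz) _ ·) (norm_nonneg q) hq
    intro b
    rw [norm_mul]
    have h1 := norm_qsq_le hq hz b
    have h2 : ‖z * q^(b+1)‖ ≤ 1 := by
      rw [norm_mul, norm_pow]
      have := pow_le_one₀ (norm_nonneg q) hq.le (n := b+1)
      nlinarith [norm_nonneg z, pow_nonneg (norm_nonneg q) (b+1)]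
    nlinarith [norm_nonneg (q^(b^2) * z^b), norm_nonneg (z * q^(b+1)),
      pow_nonneg (norm_nonneg q) b]
  have hSW : Summable (fun b : ℕ =>
      q^(b^2) * (q^(2*b+1) * z^(b+1)) / (qp q b * qpa (z*q^2) q (b+1))) := by
    apply summable_div_lb' (mul_pos hc0 hc0) zero_le_one
      (fun b => denom_lb hq hc0 hcb (ha_mul_q2 hq hz) b (b+1)) (norm_nonneg q) hq
    intro b
    rw [norm_mul, norm_mul, norm_pow, norm_pow, norm_pow]
    have hz1 : ‖z‖^(b+1) ≤ 1 := pow_le_one₀ (norm_nonneg z) hz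
    have h1 : ‖q‖^(b^2) * (‖q‖^(2*b+1) * ‖z‖^(b+1)) ≤ ‖q‖^(b^2) * ‖q‖^(2*b+1) := by
      nlinarith [mul_nonneg (pow_nonneg (norm_nonneg q) (b^2)) (pow_nonneg (norm_nonneg q) (2*b+1)),
        pow_nonneg (norm_nonneg z) (b+1), pow_nonneg (norm_nonneg q) (b^2),
        pow_nonneg (norm_nonneg q) (2*b+1)]
    have h2 : ‖q‖^(b^2) * ‖q‖^(2*b+1) ≤ ‖q‖^b := by
      rw [← pow_add]
      exact pow_le_pow_of_le_one (norm_nonneg q) hq.le (by nlinarith)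
    calc ‖q‖^(b^2) * (‖q‖^(2*b+1) * ‖z‖^(b+1)) ≤ ‖q‖^(b^2) * ‖q‖^(2*b+1) := h1
      _ ≤ ‖q‖^b := h2
      _ = 1 * ‖q‖^b := by ring
  have hsplit : dud q z = (∑' b:ℕ, q^(b^2)*z^b*(1-q^b)/(qp q b * qpa (z*q^2) q b))
      - ∑' b:ℕ, q^(b^2)*z^b*(z*q^(b+1))/(qp q b * qpa (z*q^2) q b) := by
    unfold dud
    rw [← Summable.tsum_sub hSU hSV]
    apply tsum_congr
    intro b
    rw [div_sub_div_same]
    congr 1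
    ring
  have hshift : (∑' b:ℕ, q^(b^2)*z^b*(1-q^b)/(qp q b * qpa (z*q^2) q b))
      = ∑' b:ℕ, q^(b^2)*(q^(2*b+1)*z^(b+1))/(qp q b * qpa (z*q^2) q (b+1)) := by
    rw [Summable.tsum_eq_zero_add hSU]
    have h0 : q^((0:ℕ)^2)*z^(0:ℕ)*(1-q^(0:ℕ))/(qp q 0 * qpa (z*q^2) q 0) = 0 := by
      norm_num
    rw [h0, zero_add]
    apply tsum_congr
    intro b
    have h1 : (b+1)^2 = b^2 + (2*b+1) := by ring
    rw [h1, pow_add, qp_succ]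
    field_simp [hP b, one_sub_qpow_ne hq b, hB (b+1)]
  have hterm : ∀ b : ℕ, q^(b^2)*(q^(2*b+1)*z^(b+1))/(qp q b * qpa (z*q^2) q (b+1))
      - q^(b^2)*z^b*(z*q^(b+1))/(qp q b * qpa (z*q^2) q b)
      = (-(q*z)/(1 - z*q^2)) *
        (q^(b^2)*(q*z)^b*((1 - q^b) - (q*z)*q^(b+1))/(qp q b * qpa ((q*z)*q^2) q b)) := by
    intro b
    have h3 : qpa (z*q^2) q (b+1) = qpa (z*q^2) q b * (1 - z*q^(b+2)) := by
      rw [qpa_succ, show (z*q^2)*q^b = z*q^(b+2) by ring]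
    have h2 : qpa (z*q^2) q (b+1) = qpa ((q*z)*q^2) q b * (1 - z*q^2) := by
      rw [qpa_succ' (z*q^2) q b, show (z*q^2)*q = (q*z)*q^2 by ring]
    have hzb2 : (1:ℂ) - z*q^(b+2) ≠ 0 := one_sub_z_pow_ne hq hz (b+1)
    have hVB : q^(b^2)*z^b*(z*q^(b+1))/(qp q b * qpa (z*q^2) q b)
        = q^(b^2)*(z^(b+1)*q^(b+1)*(1 - z*q^(b+2)))/(qp q b * qpa (z*q^2) q (b+1)) := by
      rw [h3, div_eq_div_iff (mul_ne_zero (hP b) (hB b))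
        (mul_ne_zero (hP b) (mul_ne_zero (hB b) hzb2))]
      ring
    rw [hVB, div_sub_div_same, h2, div_mul_div_comm,
      div_eq_div_iff (mul_ne_zero (hP b) (mul_ne_zero (hC b) hq2ne))
        (mul_ne_zero hq2ne (mul_ne_zero (hP b) (hC b)))]
    ring
  rw [hsplit, hshift, ← Summable.tsum_sub hSW hSV]
  have : dud q (q*z) = ∑' b:ℕ,
      q^(b^2)*(q*z)^b*((1 - q^b) - (q*z)*q^(b+1))/(qp q b * qpa ((q*z)*q^2) q b) := rfl
  rw [this, ← tsum_mul_left]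
  exact tsum_congr hterm

end Phi

namespace Phi

variable {q : ℂ}

lemma dud_bound (hq : ‖q‖ < 1) : ∃ M : ℝ, 0 ≤ M ∧ ∀ z : ℂ, ‖z‖ ≤ 1 → ‖dud q z‖ ≤ M := by
  obtain ⟨c, hc0, hcb⟩ := exists_lb hq
  have hq1 : (0:ℝ) < 1 - ‖q‖ := by linarith
  refine ⟨3/(c*c) * (1-‖q‖)⁻¹, by positivity, ?_⟩
  intro z hz
  have hgs : HasSum (fun b : ℕ => 3/(c*c) * ‖q‖^b) (3/(c*c) * (1-‖q‖)⁻¹) :=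
    (hasSum_geometric_of_lt_one (norm_nonneg q) hq).mul_left _
  apply tsum_of_norm_bounded hgs
  intro b
  rw [norm_div, norm_mul]
  have h1 := norm_qsq_le hq hz b
  have h2 : ‖(1 - q^b) - z*q^(b+1)‖ ≤ 3 := bracket_le hq hz b 1
  have h3 := denom_lb hq hc0 hcb (ha_mul_q2 hq hz) b b
  calc ‖q^(b^2)*z^b‖ * ‖(1 - q^b) - z*q^(b+1)‖ / ‖qp q b * qpa (z*q^2) q b‖
      ≤ ‖q‖^b * 3 / (c*c) :=
        div_le_div₀ (by positivity)
          (mul_le_mul h1 h2 (norm_nonneg _) (pow_nonneg (norm_nonneg q) b))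
          (mul_pos hc0 hc0) h3
    _ = 3/(c*c) * ‖q‖^b := by ring

lemma dud_iter (hq : ‖q‖ < 1) {z : ℂ} (hz : ‖z‖ ≤ 1) (N : ℕ) :
    dud q z = (∏ k ∈ range N, (-(q^(k+1)*z)/(1 - z*q^(k+2)))) * dud q (q^N * z) := by
  induction N with
  | zero => simp
  | succ N ih =>
    have hzN : ‖q^N * z‖ ≤ 1 := by
      rw [norm_mul, norm_pow]
      nlinarith [norm_nonneg z, pow_nonneg (norm_nonneg q) N,
        pow_le_one₀ (norm_nonneg q) hq.le (n := N)]
    have hrec := dud_rec hq hzN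
    rw [Finset.prod_range_succ, ih, hrec]
    rw [show q*(q^N*z) = q^(N+1)*z by ring,
      show q^N*z*q^2 = z*q^(N+2) by ring]
    ring

lemma prod_tendsto_zero {f : ℕ → ℝ} (h0 : ∀ k, 0 ≤ f k) (h : Tendsto f atTop (nhds 0)) :
    Tendsto (fun N => ∏ k ∈ range N, f k) atTop (nhds 0) := by
  obtain ⟨K, hK⟩ : ∃ K, ∀ k ≥ K, f k ≤ 1/2 :=
    eventually_atTop.mp (h.eventually (eventually_le_nhds (by norm_num : (0:ℝ) < 1/2)))
  have hgt : Tendsto (fun N : ℕ => ((∏ k ∈ range K, f k) * 2^K) * (1/2)^N) atTop (nhds 0) := by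
    have := tendsto_pow_atTop_nhds_zero_of_lt_one (by norm_num : (0:ℝ) ≤ 1/2) (by norm_num)
    simpa using this.const_mul ((∏ k ∈ range K, f k) * 2^K)
  apply squeeze_zero_norm' _ hgt
  rw [eventually_atTop]
  refine ⟨K, fun N hN => ?_⟩
  have hprodnn : ∀ s : Finset ℕ, (0:ℝ) ≤ ∏ k ∈ s, f k := fun s => Finset.prod_nonneg fun k _ => h0 k
  rw [Real.norm_eq_abs, abs_of_nonneg (hprodnn _)]
  rw [← Finset.prod_range_mul_prod_Ico f hN]
  have h1 : ∏ k ∈ Finset.Ico K N, f k ≤ (1/2)^(N-K) := by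
    calc ∏ k ∈ Finset.Ico K N, f k ≤ ∏ k ∈ Finset.Ico K N, (1/2 : ℝ) :=
          Finset.prod_le_prod (fun k _ => h0 k) (fun k hk => hK k (Finset.mem_Ico.mp hk).1)
      _ = (1/2)^(N-K) := by rw [Finset.prod_const, Nat.card_Ico]
  have h2 : ((1:ℝ)/2)^(N-K) = 2^K * (1/2)^N := by
    have : ((1:ℝ)/2)^(N-K) * (1/2)^K = (1/2)^N := by
      rw [← pow_add]
      congr 1
      omega
    have h2pos : ((1:ℝ)/2)^K > 0 := by positivity
    field_simp at this ⊢
    rw [← this, mul_assoc, ← mul_pow]; norm_num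
  calc (∏ k ∈ range K, f k) * ∏ k ∈ Finset.Ico K N, f k
      ≤ (∏ k ∈ range K, f k) * (1/2)^(N-K) := by
        have := hprodnn (range K)
        nlinarith [h1, hprodnn (Finset.Ico K N)]
    _ = (∏ k ∈ range K, f k) * 2^K * (1/2)^N := by rw [h2]; ring

lemma dud_zero (hq : ‖q‖ < 1) {z : ℂ} (hz : ‖z‖ ≤ 1) : dud q z = 0 := by
  obtain ⟨M, hM0, hMb⟩ := dud_bound hq
  have hq2 : ‖q‖^2 < 1 := by nlinarith [norm_nonneg q]
  have hq2' : (0:ℝ) < 1 - ‖q‖^2 := by linarith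
  have hfac : ∀ N, ‖dud q z‖ ≤ (∏ k ∈ range N, ‖q‖^(k+1)/(1-‖q‖^2)) * M := by
    intro N
    have hzN : ‖q^N * z‖ ≤ 1 := by
      rw [norm_mul, norm_pow]
      nlinarith [norm_nonneg z, pow_nonneg (norm_nonneg q) N,
        pow_le_one₀ (norm_nonneg q) hq.le (n := N)]
    rw [dud_iter hq hz N, norm_mul, norm_prod]
    have hb : ∀ k, ‖-(q^(k+1)*z)/(1 - z*q^(k+2))‖ ≤ ‖q‖^(k+1)/(1-‖q‖^2) := by
      intro k
      rw [norm_div, norm_neg, norm_mul, norm_pow]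
      have hden : 1 - ‖q‖^2 ≤ ‖(1:ℂ) - z*q^(k+2)‖ := by
        have h1 : ‖z*q^(k+2)‖ ≤ ‖q‖^2 := by
          rw [norm_mul, norm_pow]
          have h2 : ‖q‖^(k+2) ≤ ‖q‖^2 :=
            pow_le_pow_of_le_one (norm_nonneg q) hq.le (by omega)
          nlinarith [norm_nonneg z, pow_nonneg (norm_nonneg q) (k+2)]
        have := norm_sub_norm_le (1:ℂ) (z*q^(k+2))
        simp only [norm_one] at this
        linarith
      have hnum : ‖q‖^(k+1) * ‖z‖ ≤ ‖q‖^(k+1) := by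
        nlinarith [pow_nonneg (norm_nonneg q) (k+1), norm_nonneg z]
      exact div_le_div₀ (by positivity) hnum hq2' hden
    apply mul_le_mul
    · exact Finset.prod_le_prod (fun k _ => norm_nonneg _) (fun k _ => hb k)
    · exact hMb _ hzN
    · exact norm_nonneg _
    · exact Finset.prod_nonneg fun k _ => by positivity
  have hf0 : Tendsto (fun k : ℕ => ‖q‖^(k+1)/(1-‖q‖^2)) atTop (nhds 0) := by
    have h1 : Tendsto (fun k : ℕ => ‖q‖^(k+1)) atTop (nhds 0) :=
      (tendsto_pow_atTop_nhds_zero_of_lt_one (norm_nonneg q) hq).comp (tendsto_add_atTop_nat 1)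
    simpa using h1.div_const (1-‖q‖^2)
  have hgt : Tendsto (fun N => (∏ k ∈ range N, ‖q‖^(k+1)/(1-‖q‖^2)) * M) atTop (nhds 0) := by
    have := (prod_tendsto_zero (fun k => by positivity) hf0).mul_const M
    simpa using this
  have : ‖dud q z‖ ≤ 0 := ge_of_tendsto hgt (Eventually.of_forall hfac)
  exact norm_le_zero_iff.mp this

end Phi

namespace Phi

variable {q : ℂ}

lemma duf_fe (hq : ‖q‖ < 1) {z : ℂ} (hz : ‖z‖ ≤ 1) : duf q (q*z) = (1 - z*q) * duf q z := by
  have h := dud_eq hq hz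
  rw [dud_zero hq hz] at h
  linear_combination h

lemma norm_pow_mul_le_one (hq : ‖q‖ < 1) {z : ℂ} (hz : ‖z‖ ≤ 1) (N : ℕ) : ‖q^N * z‖ ≤ 1 := by
  rw [norm_mul, norm_pow]
  nlinarith [norm_nonneg z, pow_nonneg (norm_nonneg q) N,
    pow_le_one₀ (norm_nonneg q) hq.le (n := N)]

lemma duf_iter (hq : ‖q‖ < 1) {z : ℂ} (hz : ‖z‖ ≤ 1) (N : ℕ) :
    duf q z * qpa (z*q) q N = duf q (q^N * z) := by
  induction N with
  | zero => simp [qpa]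
  | succ N ih =>
    have hzN : ‖q^N * z‖ ≤ 1 := norm_pow_mul_le_one hq hz N
    have hfe := duf_fe hq hzN
    rw [show q*(q^N*z) = q^(N+1)*z by ring] at hfe
    rw [qpa_succ, ← mul_assoc, ih, hfe]
    ring

lemma duf_near_one (hq : ‖q‖ < 1) {c : ℝ} (hc0 : 0 < c)
    (hcb : ∀ (n : ℕ) (w : ℕ → ℂ), (∀ k, ‖w k‖ ≤ ‖q‖ ^ (k+1)) → c ≤ ‖∏ k ∈ range n, (1 - w k)‖)
    {w : ℂ} (hw : ‖w‖ ≤ 1/2) : ‖duf q w - 1‖ ≤ 2 / (c*c) * ‖w‖ := by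
  have hw1 : ‖w‖ ≤ 1 := le_trans hw (by norm_num)
  have h1 : Summable (fun b : ℕ => q^(b^2) * w^b / (qp q b * qpa (w*q) q b)) :=
    summable_duf hq hw1
  have heq : duf q w - 1 = ∑' b : ℕ, q^((b+1)^2) * w^(b+1) / (qp q (b+1) * qpa (w*q) q (b+1)) := by
    unfold duf
    rw [Summable.tsum_eq_zero_add h1]
    have h0 : q^((0:ℕ)^2) * w^(0:ℕ) / (qp q 0 * qpa (w*q) q 0) = 1 := by
      norm_num [qp, qpa]
    rw [h0]
    ring
  rw [heq]
  have hgs : HasSum (fun b : ℕ => ‖w‖ / (c*c) * (1/2) ^ b) (‖w‖ / (c*c) * (1 - 1/2)⁻¹) :=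
    (hasSum_geometric_of_lt_one (by norm_num) (by norm_num)).mul_left _
  have hb := tsum_of_norm_bounded hgs
    (f := fun b : ℕ => q^((b+1)^2) * w^(b+1) / (qp q (b+1) * qpa (w*q) q (b+1))) ?_
  · calc ‖∑' b : ℕ, q^((b+1)^2) * w^(b+1) / (qp q (b+1) * qpa (w*q) q (b+1))‖
        ≤ ‖w‖ / (c*c) * (1 - 1/2)⁻¹ := hb
      _ = 2 / (c*c) * ‖w‖ := by ring
  · intro b
    rw [norm_div, norm_mul, norm_pow, norm_pow]
    have hd := denom_lb hq hc0 hcb (ha_mul_q hq hw1) (b+1) (b+1)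
    have hnum : ‖q‖^((b+1)^2) * ‖w‖^(b+1) ≤ ‖w‖ * (1/2)^b := by
      have e1 : ‖q‖^((b+1)^2) ≤ 1 := pow_le_one₀ (norm_nonneg q) hq.le
      have e2 : ‖w‖^(b+1) = ‖w‖ * ‖w‖^b := by ring
      have e3 : ‖w‖^b ≤ (1/2)^b := pow_le_pow_left₀ (norm_nonneg w) hw b
      nlinarith [pow_nonneg (norm_nonneg w) (b+1), pow_nonneg (norm_nonneg w) b,
        norm_nonneg w, pow_nonneg (norm_nonneg q) ((b+1)^2),
        pow_le_one₀ (norm_nonneg w) hw1 (n := b)]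
    calc ‖q‖^((b+1)^2) * ‖w‖^(b+1) / ‖qp q (b+1) * qpa (w*q) q (b+1)‖
        ≤ (‖w‖ * (1/2)^b) / (c*c) := div_le_div₀ (by positivity) hnum (mul_pos hc0 hc0) hd
      _ = ‖w‖ / (c*c) * (1/2)^b := by ring

lemma duf_tendsto (hq : ‖q‖ < 1) (z : ℂ) :
    Tendsto (fun N : ℕ => duf q (q ^ N * z)) atTop (nhds 1) := by
  obtain ⟨c, hc0, hcb⟩ := exists_lb hq
  have h0 : Tendsto (fun N : ℕ => q ^ N * z) atTop (nhds 0) := by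
    have := (tendsto_pow_atTop_nhds_zero_of_norm_lt_one hq).mul_const z
    simpa using this
  have hev : ∀ᶠ N : ℕ in atTop, ‖q ^ N * z‖ ≤ 1/2 := by
    have := h0.norm
    simp only [norm_zero] at this
    exact this.eventually (eventually_le_nhds (by norm_num))
  have hsq : Tendsto (fun N : ℕ => duf q (q ^ N * z) - 1) atTop (nhds 0) := by
    have hgt : Tendsto (fun N : ℕ => 2 / (c*c) * ‖q ^ N * z‖) atTop (nhds 0) := by
      have := h0.norm
      simp only [norm_zero] at this
      simpa using this.const_mul (2 / (c*c))
    apply squeeze_zero_norm' _ hgt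
    filter_upwards [hev] with N hN
    exact duf_near_one hq hc0 hcb hN
  have := hsq.add_const 1
  simpa using this

lemma duf_eq (hq : ‖q‖ < 1) {z : ℂ} (hz : ‖z‖ ≤ 1) : duf q z * qpaInf (z*q) q = 1 := by
  have h1 : Tendsto (fun N => duf q z * qpa (z*q) q N) atTop
      (nhds (duf q z * qpaInf (z*q) q)) :=
    (tendsto_qpa hq (ha_mul_q hq hz)).const_mul _
  have h2 : Tendsto (fun N => duf q (q^N * z)) atTop (nhds 1) := duf_tendsto hq z
  apply tendsto_nhds_unique _ h2
  exact (funext (duf_iter hq hz) : (fun N => duf q z * qpa (z*q) q N) = _) ▸ h1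

lemma durfee (hq : ‖q‖ < 1) (a : ℕ) :
    ∑' b : ℕ, q^(b^2 + a*b) / (qp q b * qp q (a+b)) = 1 / qpInf q := by
  have hza : ‖(q:ℂ)^a‖ ≤ 1 := by
    rw [norm_pow]; exact pow_le_one₀ (norm_nonneg q) hq.le
  have hqpadd : ∀ b, qp q (a+b) = qp q a * qpa (q^a*q) q b := by
    intro b
    unfold qp qpa
    rw [Finset.prod_range_add]
    congr 1
    exact Finset.prod_congr rfl fun k _ => by rw [show q^a*q*q^k = q^(a+k+1) by ring]
  have hqpane : ∀ b, qpa (q^a*q) q b ≠ 0 := qpa_ne hq (ha_mul_q hq hza)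
  have hterm : ∀ b : ℕ, q^(b^2 + a*b) / (qp q b * qp q (a+b))
      = (qp q a)⁻¹ * (q^(b^2) * (q^a)^b / (qp q b * qpa (q^a*q) q b)) := by
    intro b
    rw [hqpadd b]
    have h1 := qp_ne hq a
    have h2 := qp_ne hq b
    have h3 := hqpane b
    field_simp
    rw [pow_add, pow_mul]
  have h4 : (∑' b : ℕ, q^(b^2 + a*b) / (qp q b * qp q (a+b)))
      = (qp q a)⁻¹ * duf q (q^a) := by
    rw [tsum_congr hterm]
    exact tsum_mul_left
  have h5 : duf q (q^a) * qpaInf (q^a*q) q = 1 := duf_eq hq hza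
  have hQ : Tendsto (fun N => qp q (a+N)) atTop (nhds (qpaInf q q)) := by
    have h := (tendsto_qpa hq (fun k => ha_q k)).comp (tendsto_add_atTop_nat a)
    have he : ((fun m => qpa q q m) ∘ (fun N => N + a)) = fun N => qp q (a+N) := by
      funext N
      simp [qp_eq_qpa, add_comm]
    rwa [he] at h
  have h6 : qp q a * qpaInf (q^a*q) q = qpaInf q q := by
    apply tendsto_nhds_unique _ hQ
    have h1 : Tendsto (fun N => qp q a * qpa (q^a*q) q N) atTop
        (nhds (qp q a * qpaInf (q^a*q) q)) :=
      (tendsto_qpa hq (ha_mul_q hq hza)).const_mul _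
    exact (funext (fun N => (hqpadd N).symm) :
      (fun N => qp q a * qpa (q^a*q) q N) = fun N => qp q (a+N)) ▸ h1
  have h7 : qpInf q = qp q a * qpaInf (q^a*q) q := by
    rw [qpInf_eq_qpaInf]; exact h6.symm
  have hqpaInfne : qpaInf (q^a*q) q ≠ 0 := by
    intro h0
    rw [h0, mul_zero] at h5
    exact one_ne_zero h5.symm
  rw [h4, h7]
  have h1 := qp_ne hq a
  field_simp
  linear_combination h5

end Phi


/-- `Φ_{-3_1}(q)`: identity for the mirror trefoil. -/
theorem phi_neg_3_1 (q : ℂ) (hq : ‖q‖ < 1) :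
    ∑' a : ℕ, ∑' b : ℕ, ∑' c : ℕ,
      q ^ (a + b ^ 2 + c ^ 2 + a * b + a * c) /
        (qp q a * qp q b * qp q c * qp q (a + b) * qp q (a + c)) =
    1 / qpInf q ^ 3 := by
  have hc : ∀ a b : ℕ, (∑' c : ℕ, q ^ (a + b ^ 2 + c ^ 2 + a * b + a * c) /
        (qp q a * qp q b * qp q c * qp q (a + b) * qp q (a + c)))
      = (q ^ (a + b ^ 2 + a * b) / (qp q a * qp q b * qp q (a + b))) * (1 / qpInf q) := by
    intro a b
    have ht : ∀ cc : ℕ, q ^ (a + b ^ 2 + cc ^ 2 + a * b + a * cc) /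
          (qp q a * qp q b * qp q cc * qp q (a + b) * qp q (a + cc))
        = (q ^ (a + b ^ 2 + a * b) / (qp q a * qp q b * qp q (a + b))) *
          (q ^ (cc ^ 2 + a * cc) / (qp q cc * qp q (a + cc))) := by
      intro cc
      rw [div_mul_div_comm, ← pow_add]
      congr 1
      · congr 1
        ring
      · ring
    rw [tsum_congr ht, tsum_mul_left, Phi.durfee hq a]
  have hb : ∀ a : ℕ, (∑' b : ℕ, (q ^ (a + b ^ 2 + a * b) /
        (qp q a * qp q b * qp q (a + b))) * (1 / qpInf q))
      = (q ^ a / qp q a) * ((1 / qpInf q) * (1 / qpInf q)) := by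
    intro a
    rw [tsum_mul_right]
    have ht : ∀ b : ℕ, q ^ (a + b ^ 2 + a * b) / (qp q a * qp q b * qp q (a + b))
        = (q ^ a / qp q a) * (q ^ (b ^ 2 + a * b) / (qp q b * qp q (a + b))) := by
      intro b
      rw [div_mul_div_comm, ← pow_add]
      congr 1
      · congr 1
        ring
      · ring
    rw [tsum_congr ht, tsum_mul_left, Phi.durfee hq a]
    ring
  calc ∑' a : ℕ, ∑' b : ℕ, ∑' c : ℕ,
        q ^ (a + b ^ 2 + c ^ 2 + a * b + a * c) /
          (qp q a * qp q b * qp q c * qp q (a + b) * qp q (a + c))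
      = ∑' a : ℕ, ∑' b : ℕ, (q ^ (a + b ^ 2 + a * b) /
          (qp q a * qp q b * qp q (a + b))) * (1 / qpInf q) :=
        tsum_congr fun a => tsum_congr fun b => hc a b
    _ = ∑' a : ℕ, (q ^ a / qp q a) * ((1 / qpInf q) * (1 / qpInf q)) := tsum_congr hb
    _ = (∑' a : ℕ, q ^ a / qp q a) * ((1 / qpInf q) * (1 / qpInf q)) := tsum_mul_right
    _ = (1 / qpInf q) * ((1 / qpInf q) * (1 / qpInf q)) := by rw [Phi.euler_q hq]
    _ = 1 / qpInf q ^ 3 := by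
        rw [div_mul_div_comm, div_mul_div_comm, one_mul, one_mul]
        congr 1
        ring
end
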